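/- arXiv:1410.7202 — 9 statements merged into one kernel-verified Lean document; each statement's English description precedes it below -/
import Mathlib

section
/- Let λ₁, …, λₙ be n mutually distinct complex numbers, a_q = 1 / ∏_{s ≠ q} (λ_q − λ_s), and p_i(x) = ∑_{k=0}^{n−1} λᵢ^k x^k / k! the degree-(n−1) Taylor truncation of e^{λᵢ x}. Then, as an identity of polynomials, a₁ p₁(x) + ⋯ + aₙ pₙ(x) = x^{n−1}/(n−1)!. -/
open Polynomial Finset

lemma basis_leadingCoeff {F : Type*} [Field F] {ι : Type*} [DecidableEq ι]
    (s : Finset ι) (v : ι → F) (i : ι) :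
    (Lagrange.basis s v i).leadingCoeff = ∏ j ∈ s.erase i, (v i - v j)⁻¹ := by
  unfold Lagrange.basis
  rw [leadingCoeff_prod]
  apply Finset.prod_congr rfl
  intro j _
  unfold Lagrange.basisDivisor
  rcases eq_or_ne (v i) (v j) with h | h
  · simp [h]
  · rw [leadingCoeff_mul]
    simp [leadingCoeff_X_sub_C]

lemma key (n : ℕ) (hn : 1 ≤ n) (l : Fin n → ℂ) (hl : Function.Injective l)
    (k : ℕ) (hk : k < n) :
    ∑ q, (∏ s ∈ Finset.univ.erase q, (l q - l s))⁻¹ * l q ^ k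
      = if k = n - 1 then 1 else 0 := by
  have hinj : Set.InjOn l (Finset.univ : Finset (Fin n)) := hl.injOn
  have hdeg : (X ^ k : Polynomial ℂ).degree < (Finset.univ : Finset (Fin n)).card := by
    simp [Polynomial.degree_X_pow]
    exact_mod_cast hk
  have hX : (X ^ k : Polynomial ℂ)
      = Lagrange.interpolate Finset.univ l (fun q => (X ^ k : Polynomial ℂ).eval (l q)) :=
    Lagrange.eq_interpolate hinj hdeg
  have := congrArg (fun f : Polynomial ℂ => f.coeff (n - 1)) hX
  simp only [Lagrange.interpolate_apply, Polynomial.finset_sum_coeff,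
    Polynomial.coeff_C_mul, Polynomial.coeff_X_pow, Polynomial.eval_pow,
    Polynomial.eval_X] at this
  have hb : ∀ q : Fin n, (Lagrange.basis Finset.univ l q).coeff (n - 1)
      = ∏ s ∈ Finset.univ.erase q, (l q - l s)⁻¹ := by
    intro q
    have hnd : (Lagrange.basis Finset.univ l q).natDegree = n - 1 := by
      have := Lagrange.natDegree_basis hinj (Finset.mem_univ q)
      simpa using this
    rw [← hnd, ← Polynomial.leadingCoeff, basis_leadingCoeff]
  rw [show (if k = n - 1 then (1:ℂ) else 0) = if n - 1 = k then 1 else 0 by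
    simp [eq_comm]]
  rw [this]
  apply Finset.sum_congr rfl
  intro q _
  rw [hb q, Finset.prod_inv_distrib, mul_comm]

/-- With `a_q = 1 / ∏_{s ≠ q} (λ_q − λ_s)` and `p_i(x) = ∑_{k=0}^{n-1} λ_i^k x^k / k!`
the degree-`(n−1)` Taylor truncation of `e^{λ_i x}`, one has the polynomial identity
`a₁ p₁(x) + ⋯ + aₙ pₙ(x) = x^{n−1}/(n−1)!`. -/
theorem stmt2 (n : ℕ) (hn : 1 ≤ n) (l : Fin n → ℂ) (hl : Function.Injective l)
    (a : Fin n → ℂ)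
    (ha : ∀ q, a q = (∏ s ∈ Finset.univ.erase q, (l q - l s))⁻¹)
    (p : Fin n → Polynomial ℂ)
    (hp : ∀ i, p i = ∑ k ∈ Finset.range n,
      Polynomial.C (l i ^ k / (k.factorial : ℂ)) * Polynomial.X ^ k) :
    ∑ q, Polynomial.C (a q) * p q =
      Polynomial.C (((n - 1).factorial : ℂ))⁻¹ * Polynomial.X ^ (n - 1) := by
  simp only [hp, ha, Finset.mul_sum]
  rw [Finset.sum_comm]
  have : ∀ k ∈ Finset.range n,
      (∑ q : Fin n, Polynomial.C (∏ s ∈ Finset.univ.erase q, (l q - l s))⁻¹ *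
        (Polynomial.C (l q ^ k / (k.factorial : ℂ)) * Polynomial.X ^ k))
      = Polynomial.C ((if k = n - 1 then 1 else 0) / (k.factorial : ℂ)) * Polynomial.X ^ k := by
    intro k hk
    rw [Finset.mem_range] at hk
    have hkey := key n hn l hl k hk
    rw [← hkey]
    simp only [← mul_assoc, ← Polynomial.C_mul]
    rw [← Finset.sum_mul, ← map_sum]
    simp only [Finset.sum_div, mul_div_assoc]
  rw [Finset.sum_congr rfl this]
  rw [Finset.sum_eq_single (n - 1)]
  · simp [div_eq_inv_mul]
  · intro b _ hb
    simp [hb]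
  · intro h
    exact absurd (Finset.mem_range.mpr (Nat.sub_lt_of_pos_le one_pos hn)) h
end

section
/- Let λ₁, …, λₙ be n mutually distinct complex numbers with ε = max(|λ₁|, …, |λₙ|), and let B_{n,q} = ∑_{i=1}^{n} a_i λᵢ^{n−1+q} where a_q = 1 / ∏_{s ≠ q} (λ_q − λ_s). Then for every q ≥ 1 one has |B_{n,q}| ≤ n^q ε^q. -/
open Polynomial Finset

lemma stmt6_dd (n : ℕ) (l : Fin n → ℂ) (hl : Function.Injective l)
    (a : Fin n → ℂ) (ha : ∀ q, a q = (∏ s ∈ Finset.univ.erase q, (l q - l s))⁻¹)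
    (f : Polynomial ℂ) (hf : f.degree < n) :
    ∑ i, a i * f.eval (l i) = f.coeff (n - 1) := by
  classical
  set F : Polynomial ℂ :=
    ∑ i, Polynomial.C (a i * f.eval (l i)) * ∏ s ∈ Finset.univ.erase i, (X - C (l s)) with hF
  have hmon : ∀ i : Fin n, (∏ s ∈ Finset.univ.erase i, (X - C (l s))).Monic :=
    fun i => monic_prod_of_monic _ _ fun s _ => monic_X_sub_C _
  have hdeg : ∀ i : Fin n, (∏ s ∈ Finset.univ.erase i, (X - C (l s))).natDegree = n - 1 := by
    intro i
    rw [natDegree_prod_of_monic _ _ fun s _ => monic_X_sub_C _]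
    simp [Finset.card_erase_of_mem]
  have hprod_ne : ∀ i : Fin n, (∏ s ∈ Finset.univ.erase i, (l i - l s)) ≠ 0 := by
    intro i
    refine Finset.prod_ne_zero_iff.mpr fun s hs => sub_ne_zero_of_ne fun h => ?_
    exact (Finset.mem_erase.mp hs).1.symm (hl h)
  have ha1 : ∀ i : Fin n, a i * (∏ s ∈ Finset.univ.erase i, (l i - l s)) = 1 := by
    intro i; rw [ha i]; exact inv_mul_cancel₀ (hprod_ne i)
  have hFdeg : F.degree < n := by
    refine lt_of_le_of_lt (degree_sum_le _ _) ?_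
    rw [Finset.sup_lt_iff (by exact_mod_cast WithBot.bot_lt_coe n)]
    intro i _
    refine lt_of_le_of_lt (degree_mul_le _ _) ?_
    have h1 : (C (a i * f.eval (l i))).degree ≤ 0 := degree_C_le
    have h2 : (∏ s ∈ Finset.univ.erase i, (X - C (l s))).degree = ((n - 1 : ℕ) : WithBot ℕ) := by
      rw [degree_eq_natDegree (hmon i).ne_zero, hdeg i]
    have hn : 0 < n := i.pos
    calc (C (a i * f.eval (l i))).degree + (∏ s ∈ Finset.univ.erase i, (X - C (l s))).degree
        ≤ 0 + ((n - 1 : ℕ) : WithBot ℕ) := add_le_add h1 (le_of_eq h2)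
      _ = ((n - 1 : ℕ) : WithBot ℕ) := by rw [zero_add]
      _ < n := by exact_mod_cast Nat.sub_lt hn one_pos
  have hFf : F = f := by
    refine Polynomial.eq_of_degrees_lt_of_eval_index_eq (v := l) Finset.univ
      (Function.Injective.injOn hl) ?_ ?_ ?_
    · simpa using hFdeg
    · simpa using hf
    · intro j _
      rw [hF, eval_finset_sum]
      rw [Finset.sum_eq_single j]
      · rw [eval_mul, eval_C, eval_prod]
        simp_rw [eval_sub, eval_X, eval_C]
        rw [mul_comm (a j), mul_assoc, ha1 j, mul_one]
      · intro i _ hij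
        rw [eval_mul, eval_prod]
        rw [Finset.prod_eq_zero (Finset.mem_erase.mpr ⟨fun h => (hij h.symm).elim, Finset.mem_univ j⟩) (by simp), mul_zero]
      · intro h; exact absurd (Finset.mem_univ j) h
  have : F.coeff (n - 1) = ∑ i, a i * f.eval (l i) := by
    rw [hF, finset_sum_coeff]
    refine Finset.sum_congr rfl fun i _ => ?_
    rw [coeff_C_mul, ← hdeg i, (hmon i).coeff_natDegree, mul_one]
  rw [← this, hFf]

lemma stmt6_reflect {α : Type*} (l : α → ℂ) (s : Finset α) :
    reflect s.card (∏ i ∈ s, (X - C (l i))) = ∏ i ∈ s, (1 - C (l i) * X) := by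
  classical
  induction s using Finset.induction_on with
  | empty => simp [reflect_one]
  | insert x s hx ih =>
    rw [Finset.prod_insert hx, Finset.prod_insert hx, Finset.card_insert_of_notMem hx,
      add_comm s.card 1, reflect_mul _ _ (natDegree_X_sub_C_le _) ?_, ih]
    · congr 1
      have : (X - C (l x)) = C 1 * X ^ 1 + C (- l x) * X ^ 0 := by ring_nf; simp [sub_eq_add_neg]
      rw [this, reflect_add, reflect_C_mul_X_pow, reflect_C_mul_X_pow]
      simp [revAt_le]
      ring
    · exact le_trans (natDegree_prod_le _ _) (by
        refine le_trans (Finset.sum_le_card_nsmul _ _ 1 fun i _ => natDegree_X_sub_C_le _) (by simp))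

-- geometric series inverse

lemma stmt6_geom (c : ℂ) :
    ((1 - C c * X : Polynomial ℂ) : PowerSeries ℂ) * PowerSeries.mk (fun k => c ^ k) = 1 := by
  have : ((1 - C c * X : Polynomial ℂ) : PowerSeries ℂ)
      = 1 - PowerSeries.C c * PowerSeries.X := by
    push_cast [Polynomial.coe_sub, Polynomial.coe_mul, Polynomial.coe_one, Polynomial.coe_C,
      Polynomial.coe_X]
    rfl
  rw [this, sub_mul, one_mul]
  ext k
  cases k with
  | zero => simp
  | succ k =>
    rw [map_sub, mul_assoc, PowerSeries.coeff_C_mul, PowerSeries.coeff_succ_X_mul,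
      PowerSeries.coeff_one, PowerSeries.coeff_mk, PowerSeries.coeff_mk, pow_succ']
    simp

lemma stmt6_choose (n q : ℕ) (hn : 1 ≤ n) : (n + q - 1).choose q ≤ n ^ q := by
  induction q with
  | zero => simp
  | succ q ih =>
    have key : (n + (q + 1) - 1).choose (q + 1) * (q + 1) = (n + q) * (n + q - 1).choose q := by
      have h1 : n + (q + 1) - 1 = (n + q - 1) + 1 := by omega
      rw [h1, ← Nat.add_one_mul_choose_eq]
      congr 1
      omega
    have h2 : (n + q) * (n + q - 1).choose q ≤ (q + 1) * n ^ (q + 1) := by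
      calc (n + q) * (n + q - 1).choose q ≤ (n * (q + 1)) * (n + q - 1).choose q := by
            exact Nat.mul_le_mul_right _ (by nlinarith)
        _ ≤ (n * (q + 1)) * n ^ q := Nat.mul_le_mul_left _ ih
        _ = (q + 1) * n ^ (q + 1) := by ring
    refine Nat.le_of_mul_le_mul_right ?_ (Nat.succ_pos q)
    rw [key]
    calc (n + q) * (n + q - 1).choose q ≤ (q + 1) * n ^ (q + 1) := h2
      _ = n ^ (q + 1) * (q + 1) := mul_comm _ _


lemma stmt6_card (n q : ℕ) (hn : 1 ≤ n) :
    ((Finset.univ : Finset (Fin n)).finsuppAntidiag q).card ≤ n ^ q := by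
  classical
  have hcard : ∀ d ∈ (Finset.univ : Finset (Fin n)).finsuppAntidiag q,
      Multiset.card d.toMultiset = q := by
    intro d hd
    rw [Finset.mem_finsuppAntidiag] at hd
    rw [Finsupp.card_toMultiset, Finsupp.sum_fintype _ _ (fun _ => rfl)]
    exact hd.1
  have key : Fintype.card {d // d ∈ (Finset.univ : Finset (Fin n)).finsuppAntidiag q}
      ≤ Fintype.card (Sym (Fin n) q) := by
    refine Fintype.card_le_of_injective
      (fun d => (⟨(d : Fin n →₀ ℕ).toMultiset, hcard d d.2⟩ : Sym (Fin n) q)) ?_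
    intro d e h
    have h2 : (d : Fin n →₀ ℕ).toMultiset = (e : Fin n →₀ ℕ).toMultiset :=
      congrArg Sym.toMultiset h
    have h3 := congrArg Multiset.toFinsupp h2
    rw [Finsupp.toMultiset_toFinsupp, Finsupp.toMultiset_toFinsupp] at h3
    exact Subtype.ext h3
  rw [Fintype.card_coe] at key
  refine le_trans key ?_
  rw [Sym.card_sym_eq_multichoose, Nat.multichoose_eq, Fintype.card_fin]
  exact stmt6_choose n q hn

/-- With `ε = max(|λ₁|, …, |λₙ|)`, `a_q = 1 / ∏_{s ≠ q} (λ_q − λ_s)` and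
`B_{n,q} = ∑_i a_i λ_i^{n-1+q}`, one has `|B_{n,q}| ≤ n^q ε^q` for every `q ≥ 1`. -/
theorem stmt6 (n : ℕ) (hn : 1 ≤ n) (l : Fin n → ℂ) (hl : Function.Injective l)
    (ε : ℝ) (hε : IsGreatest (Set.range fun i => ‖l i‖) ε)
    (a : Fin n → ℂ)
    (ha : ∀ q, a q = (∏ s ∈ Finset.univ.erase q, (l q - l s))⁻¹)
    (q : ℕ) (hq : 1 ≤ q) :
    ‖∑ i, a i * l i ^ (n - 1 + q)‖ ≤ (n : ℝ) ^ q * ε ^ q := by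
  classical
  -- ε facts
  obtain ⟨i0, hi0⟩ := hε.1
  have hε0 : 0 ≤ ε := by rw [← hi0]; exact norm_nonneg _
  have hεub : ∀ i, ‖l i‖ ≤ ε := fun i => hε.2 ⟨i, rfl⟩
  -- the power sums
  set S : ℕ → ℂ := fun m => ∑ i, a i * l i ^ m with hSdef
  have hSm : ∀ m : ℕ, (m : WithBot ℕ) < n → S m = (X ^ m : Polynomial ℂ).coeff (n - 1) := by
    intro m hm
    have := stmt6_dd n l hl a ha (X ^ m) (by rwa [degree_X_pow])
    simpa using this
  have hS0 : ∀ m : ℕ, m < n - 1 → S m = 0 := by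
    intro m hm
    rw [hSm m (by exact_mod_cast lt_of_lt_of_le hm (Nat.sub_le n 1)), coeff_X_pow]
    simp [Nat.ne_of_gt hm]
  have hS1 : S (n - 1) = 1 := by
    rw [hSm (n - 1) (by exact_mod_cast Nat.sub_lt hn one_pos), coeff_X_pow, if_pos rfl]
  -- characteristic polynomial
  set P : Polynomial ℂ := ∏ i : Fin n, (X - C (l i)) with hPdef
  have hPmon : P.Monic := monic_prod_of_monic _ _ fun i _ => monic_X_sub_C _
  have hPdeg : P.natDegree = n := by
    rw [hPdef, natDegree_prod_of_monic _ _ fun i _ => monic_X_sub_C _]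
    simp
  have hPn : P.coeff n = 1 := by
    have := hPmon.coeff_natDegree
    rwa [hPdeg] at this
  set R : Polynomial ℂ := ∏ i : Fin n, (1 - C (l i) * X) with hRdef
  have hRP : R = reflect n P := by
    rw [hRdef, hPdef, ← stmt6_reflect l Finset.univ, Finset.card_univ, Fintype.card_fin]
  have hRcoeff : ∀ k, k ≤ n → R.coeff k = P.coeff (n - k) := by
    intro k hk
    rw [hRP, coeff_reflect, revAt_le hk]
  have hRcoeff' : ∀ k, n < k → R.coeff k = 0 := by
    intro k hk
    rw [hRP, coeff_reflect, revAt_eq_self_of_lt hk]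
    exact coeff_eq_zero_of_natDegree_lt (by rw [hPdeg]; exact hk)
  have hR0 : R.coeff 0 = 1 := by rw [hRcoeff 0 (Nat.zero_le n)]; simpa using hPn
  -- power series
  set γ : Fin n → PowerSeries ℂ := fun i => PowerSeries.mk fun k => (l i) ^ k with hγdef
  set H : PowerSeries ℂ := ∏ i, γ i with hHdef
  have hGH : (R : PowerSeries ℂ) * H = 1 := by
    rw [hRdef, hHdef]
    rw [← Polynomial.coeToPowerSeries.ringHom_apply, map_prod]
    rw [← Finset.prod_mul_distrib]
    refine Finset.prod_eq_one fun i _ => ?_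
    rw [Polynomial.coeToPowerSeries.ringHom_apply]
    exact stmt6_geom (l i)
  set h : ℕ → ℂ := fun k => PowerSeries.coeff k H with hhdef
  have hh0 : h 0 = 1 := by
    have := congrArg (PowerSeries.coeff 0) hGH
    rw [PowerSeries.coeff_zero_eq_constantCoeff, map_mul, map_one] at this
    have hRc : PowerSeries.constantCoeff (R : PowerSeries ℂ) = 1 := by
      rw [← PowerSeries.coeff_zero_eq_constantCoeff, Polynomial.coeff_coe, hR0]
    rw [hRc, one_mul] at this
    rw [hhdef]
    simpa [PowerSeries.coeff_zero_eq_constantCoeff] using this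
  have hrec : ∀ m : ℕ, h (m + 1) = -∑ u ∈ Finset.range (m + 1), R.coeff (u + 1) * h (m - u) := by
    intro m
    have h1 := congrArg (PowerSeries.coeff (m + 1)) hGH
    rw [PowerSeries.coeff_mul, PowerSeries.coeff_one, if_neg (Nat.succ_ne_zero m)] at h1
    rw [Finset.Nat.sum_antidiagonal_eq_sum_range_succ_mk] at h1
    rw [Finset.sum_range_succ'] at h1
    simp only [Polynomial.coeff_coe, Nat.sub_zero] at h1
    have h2 : ∀ u, (m + 1 - (u + 1)) = m - u := fun u => by omega
    rw [hR0, one_mul] at h1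
    have h3 : ∑ x ∈ Finset.range (m + 1), R.coeff (x + 1) * (PowerSeries.coeff (m + 1 - (x + 1))) H
        = ∑ u ∈ Finset.range (m + 1), R.coeff (u + 1) * h (m - u) :=
      Finset.sum_congr rfl fun u _ => by rw [h2 u]
    rw [h3] at h1
    linear_combination h1
  -- root relation
  have hroot : ∀ i, P.eval (l i) = 0 := by
    intro i
    rw [hPdef, eval_prod]
    exact Finset.prod_eq_zero (Finset.mem_univ i) (by simp)
  have hpow : ∀ i : Fin n, (l i) ^ n = -∑ k ∈ Finset.range n, P.coeff k * l i ^ k := by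
    intro i
    have h1 := hroot i
    rw [eval_eq_sum_range, hPdeg, Finset.sum_range_succ, hPn, one_mul] at h1
    linear_combination h1
  have hSrec : ∀ m : ℕ, S (n + m) = -∑ k ∈ Finset.range n, P.coeff k * S (k + m) := by
    intro m
    have step : ∀ i : Fin n, a i * l i ^ (n + m)
        = ∑ k ∈ Finset.range n, -(P.coeff k * (a i * l i ^ (k + m))) := by
      intro i
      rw [pow_add, hpow i, neg_mul, mul_neg, Finset.sum_mul, Finset.mul_sum,
        ← Finset.sum_neg_distrib]
      refine Finset.sum_congr rfl fun k _ => ?_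
      rw [pow_add]
      ring
    calc S (n + m) = ∑ i, ∑ k ∈ Finset.range n, -(P.coeff k * (a i * l i ^ (k + m))) :=
          Finset.sum_congr rfl fun i _ => step i
      _ = ∑ k ∈ Finset.range n, ∑ i, -(P.coeff k * (a i * l i ^ (k + m))) := Finset.sum_comm
      _ = -∑ k ∈ Finset.range n, P.coeff k * S (k + m) := by
          rw [← Finset.sum_neg_distrib]
          refine Finset.sum_congr rfl fun k _ => ?_
          rw [Finset.sum_neg_distrib, ← Finset.mul_sum]
  -- main identity
  have main : ∀ m : ℕ, S (n - 1 + m) = h m := by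
    intro m
    induction m using Nat.strong_induction_on with
    | _ m IH =>
      match m with
      | 0 => simpa using hS1.trans hh0.symm
      | (p + 1) =>
        have e1 : n - 1 + (p + 1) = n + p := by omega
        rw [e1, hSrec p, hrec p]
        congr 1
        rw [← Finset.sum_range_reflect]
        set F : ℕ → ℂ := fun j => R.coeff (j + 1) * (if j ≤ p then h (p - j) else 0) with hF
        have hL : ∀ j ∈ Finset.range n,
            P.coeff (n - 1 - j) * S (n - 1 - j + p) = F j := by
          intro j hj
          rw [Finset.mem_range] at hj
          have hc : R.coeff (j + 1) = P.coeff (n - 1 - j) := by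
            rw [hRcoeff (j + 1) (by omega)]
            congr 1
            omega
          rw [hF]
          dsimp only
          rw [hc]
          congr 1
          by_cases hjp : j ≤ p
          · rw [if_pos hjp]
            have e2 : n - 1 - j + p = n - 1 + (p - j) := by omega
            rw [e2]
            exact IH (p - j) (by omega)
          · rw [if_neg hjp]
            exact hS0 _ (by omega)
        have hB : ∀ u ∈ Finset.range (p + 1), F u = R.coeff (u + 1) * h (p - u) := by
          intro u hu
          rw [Finset.mem_range] at hu
          rw [hF]
          dsimp only
          rw [if_pos (by omega)]
        have hA : ∑ j ∈ Finset.range n, F j = ∑ j ∈ Finset.range (max n (p + 1)), F j := by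
          refine Finset.sum_subset (Finset.range_subset_range.mpr (le_max_left _ _)) ?_
          intro j hj hj'
          rw [Finset.mem_range] at hj
          rw [Finset.mem_range] at hj'
          rw [hF]
          dsimp only
          rw [hRcoeff' (j + 1) (by omega), zero_mul]
        have hC : ∑ j ∈ Finset.range (p + 1), F j = ∑ j ∈ Finset.range (max n (p + 1)), F j := by
          refine Finset.sum_subset (Finset.range_subset_range.mpr (le_max_right _ _)) ?_
          intro j hj hj'
          rw [Finset.mem_range] at hj
          rw [Finset.mem_range] at hj'
          rw [hF]
          dsimp only
          rw [if_neg (by omega), mul_zero]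
        calc ∑ j ∈ Finset.range n, P.coeff (n - 1 - j) * S (n - 1 - j + p)
            = ∑ j ∈ Finset.range n, F j := Finset.sum_congr rfl hL
          _ = ∑ j ∈ Finset.range (max n (p + 1)), F j := hA
          _ = ∑ j ∈ Finset.range (p + 1), F j := hC.symm
          _ = ∑ u ∈ Finset.range (p + 1), R.coeff (u + 1) * h (p - u) :=
              Finset.sum_congr rfl hB
  -- the bound
  have hbound : ‖h q‖ ≤ (n : ℝ) ^ q * ε ^ q := by
    have hc : h q = ∑ d ∈ Finset.univ.finsuppAntidiag q, ∏ i, (l i) ^ (d i) := by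
      rw [hhdef]
      dsimp only
      rw [hHdef, PowerSeries.coeff_prod]
      refine Finset.sum_congr rfl fun d _ => Finset.prod_congr rfl fun i _ => ?_
      rw [hγdef]
      dsimp only
      rw [PowerSeries.coeff_mk]
    rw [hc]
    refine le_trans (norm_sum_le _ _) ?_
    have hterm : ∀ d ∈ (Finset.univ : Finset (Fin n)).finsuppAntidiag q,
        ‖∏ i, l i ^ d i‖ ≤ ε ^ q := by
      intro d hd
      rw [Finset.mem_finsuppAntidiag] at hd
      rw [norm_prod]
      calc ∏ i, ‖l i ^ d i‖ ≤ ∏ i : Fin n, ε ^ d i := by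
            refine Finset.prod_le_prod (fun i _ => norm_nonneg _) (fun i _ => ?_)
            rw [norm_pow]
            exact pow_le_pow_left₀ (norm_nonneg _) (hεub i) _
        _ = ε ^ (∑ i, d i) := Finset.prod_pow_eq_pow_sum _ _ _
        _ = ε ^ q := by rw [hd.1]
    calc ∑ d ∈ (Finset.univ : Finset (Fin n)).finsuppAntidiag q, ‖∏ i, l i ^ d i‖
        ≤ ∑ _d ∈ (Finset.univ : Finset (Fin n)).finsuppAntidiag q, ε ^ q :=
          Finset.sum_le_sum hterm
      _ = ((Finset.univ : Finset (Fin n)).finsuppAntidiag q).card * ε ^ q := by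
          rw [Finset.sum_const, nsmul_eq_mul]
      _ ≤ (n : ℝ) ^ q * ε ^ q := by
          refine mul_le_mul_of_nonneg_right ?_ (pow_nonneg hε0 q)
          have := stmt6_card n q hn
          exact_mod_cast this
  have : (∑ i, a i * l i ^ (n - 1 + q)) = S (n - 1 + q) := rfl
  rw [this, main q]
  exact hbound
end

section
/- Let λ₁, …, λₙ be n mutually distinct complex numbers with ε = max(|λ₁|, …, |λₙ|), and let B_{n,q} = ∑_{i=1}^{n} a_i λᵢ^{n−1+q} where a_q = 1 / ∏_{s ≠ q} (λ_q − λ_s). Then for every q ≥ 1 and every real x, |B_{n,q} · x^{n−1+q} / (n−1+q)!| ≤ ε^q |x|^{n−1+q} / (n−1)!. -/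
open Finset Polynomial

lemma basis_coeff {N : ℕ} (l : Fin N → ℂ) (i : Fin N) :
    (Lagrange.basis univ l i).coeff (N-1) = ∏ s ∈ Finset.univ.erase i, (l i - l s)⁻¹ := by
  classical
  have hb : Lagrange.basis univ l i
      = C (Lagrange.nodalWeight univ l i) * Lagrange.nodal (univ.erase i) l := by
    rw [Lagrange.basis_eq_prod_sub_inv_mul_nodal_div (mem_univ i),
      ← Lagrange.nodal_erase_eq_nodal_div (mem_univ i)]
  rw [hb, coeff_C_mul]
  have hm : (Lagrange.nodal (univ.erase i) l).Monic := Lagrange.nodal_monic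
  have hd : (Lagrange.nodal (univ.erase i) l).natDegree = N - 1 := by
    rw [Lagrange.natDegree_nodal, card_erase_of_mem (mem_univ i), card_univ, Fintype.card_fin]
  rw [← hd, hm.coeff_natDegree, mul_one, Lagrange.nodalWeight]

lemma sum_one (N : ℕ) (hN : 1 ≤ N) (l : Fin N → ℂ) (hl : Function.Injective l) :
    ∑ i, (∏ s ∈ Finset.univ.erase i, (l i - l s))⁻¹ * l i ^ (N-1) = 1 := by
  classical
  have hinj : Set.InjOn l (univ : Finset (Fin N)) := hl.injOn
  have hdeg : (X ^ (N-1) : ℂ[X]).degree < ((univ : Finset (Fin N)).card : ℕ) := by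
    simp [degree_X_pow]
    omega
  have h := Lagrange.eq_interpolate (f := (X ^ (N-1) : ℂ[X])) hinj (by simpa using hdeg)
  have h2 := congrArg (fun p => Polynomial.coeff p (N-1)) h
  simp only [Lagrange.interpolate_apply, coeff_X_pow, if_pos rfl, finset_sum_coeff,
    coeff_C_mul, basis_coeff, eval_pow, eval_X] at h2
  calc ∑ i : Fin N, (∏ s ∈ univ.erase i, (l i - l s))⁻¹ * l i ^ (N-1)
      = ∑ x : Fin N, l x ^ (N-1) * ∏ s ∈ univ.erase x, (l x - l s)⁻¹ := by
        refine Finset.sum_congr rfl fun i _ => ?_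
        rw [prod_inv_distrib, mul_comm]
    _ = 1 := by rw [← h2]; norm_num

lemma erase_castSucc (n : ℕ) (j : Fin n) :
    (univ : Finset (Fin (n+1))).erase j.castSucc
      = insert (Fin.last n) ((univ.erase j).image Fin.castSucc) := by
  ext s
  simp only [mem_erase, mem_univ, and_true, mem_insert, mem_image]
  constructor
  · intro hs
    rcases Fin.eq_castSucc_or_eq_last s with ⟨t, rfl⟩ | rfl
    · exact Or.inr ⟨t, fun h => hs (by rw [h]), rfl⟩
    · exact Or.inl rfl
  · rintro (rfl | ⟨t, ht, rfl⟩)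
    · exact (Fin.castSucc_lt_last j).ne'
    · exact fun h => ht (Fin.castSucc_injective n h)

lemma prod_split (n : ℕ) (l : Fin (n+1) → ℂ) (j : Fin n) (z : ℂ) :
    ∏ s ∈ (univ : Finset (Fin (n+1))).erase j.castSucc, (z - l s)
      = (z - l (Fin.last n)) * ∏ s ∈ univ.erase j, (z - l s.castSucc) := by
  rw [erase_castSucc, prod_insert, prod_image]
  · intro a _ b _ h; exact Fin.castSucc_injective n h
  · simp only [mem_image]
    rintro ⟨t, _, h⟩
    exact absurd h (Fin.castSucc_lt_last t).ne

lemma recur (n : ℕ) (l : Fin (n+1) → ℂ) (hl : Function.Injective l) (m : ℕ) :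
    ∑ i, (∏ s ∈ univ.erase i, (l i - l s))⁻¹ * l i ^ (m+1)
      = l (Fin.last n) * ∑ i, (∏ s ∈ univ.erase i, (l i - l s))⁻¹ * l i ^ m
        + ∑ j : Fin n, (∏ s ∈ univ.erase j, (l j.castSucc - l s.castSucc))⁻¹ * l j.castSucc ^ m := by
  have key : ∀ j : Fin n,
      (∏ s ∈ (univ : Finset (Fin (n+1))).erase j.castSucc, (l j.castSucc - l s))⁻¹
        * (l j.castSucc - l (Fin.last n))
      = (∏ s ∈ univ.erase j, (l j.castSucc - l s.castSucc))⁻¹ := by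
    intro j
    rw [prod_split, mul_inv]
    have hd : l j.castSucc - l (Fin.last n) ≠ 0 :=
      sub_ne_zero_of_ne (fun h => (Fin.castSucc_lt_last j).ne (hl h))
    field_simp
  have expand : ∑ i, (∏ s ∈ univ.erase i, (l i - l s))⁻¹ * l i ^ (m+1)
      = l (Fin.last n) * ∑ i, (∏ s ∈ univ.erase i, (l i - l s))⁻¹ * l i ^ m
        + ∑ i, (∏ s ∈ univ.erase i, (l i - l s))⁻¹ * (l i - l (Fin.last n)) * l i ^ m := by
    rw [mul_sum, ← sum_add_distrib]
    refine sum_congr rfl fun i _ => ?_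
    ring
  rw [expand]
  congr 1
  rw [Fin.sum_univ_castSucc (f := fun i =>
    (∏ s ∈ univ.erase i, (l i - l s))⁻¹ * (l i - l (Fin.last n)) * l i ^ m)]
  simp only [sub_self, mul_zero, zero_mul, add_zero]
  refine sum_congr rfl fun j _ => ?_
  rw [key j]

lemma key_s7 (n : ℕ) : ∀ (l : Fin (n+1) → ℂ), Function.Injective l → ∀ (ε : ℝ), 0 ≤ ε →
    (∀ i, ‖l i‖ ≤ ε) → ∀ m : ℕ, n ≤ m →
    ‖∑ i, (∏ s ∈ univ.erase i, (l i - l s))⁻¹ * l i ^ m‖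
      ≤ (m.choose n : ℝ) * ε ^ (m - n) := by
  induction n with
  | zero =>
    intro l hl ε hε hb m _
    rw [show ∑ i : Fin (0+1), (∏ s ∈ univ.erase i, (l i - l s))⁻¹ * l i ^ m
      = (∏ s ∈ (univ : Finset (Fin (0+1))).erase 0, (l 0 - l s))⁻¹ * l 0 ^ m
      from Fin.sum_univ_one _]
    have : (univ : Finset (Fin (0+1))).erase 0 = ∅ := by decide
    rw [this, prod_empty, inv_one, one_mul, norm_pow, Nat.choose_zero_right, Nat.cast_one,
      one_mul, Nat.sub_zero]
    exact pow_le_pow_left₀ (norm_nonneg _) (hb 0) m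
  | succ n IH =>
    intro l hl ε hε hb m hm
    induction m, hm using Nat.le_induction with
    | base =>
      have h1 := sum_one (n+2) (by omega) l hl
      have e : n + 2 - 1 = n + 1 := by omega
      rw [e] at h1
      rw [h1]
      simp
    | succ m hm ih =>
      rw [recur (n+1) l hl m]
      have hinj' : Function.Injective (fun j : Fin (n+1) => l j.castSucc) :=
        fun a b h => Fin.castSucc_injective _ (hl h)
      have h2 : ‖∑ j : Fin (n+1),
          (∏ s ∈ univ.erase j, (l j.castSucc - l s.castSucc))⁻¹ * l j.castSucc ^ m‖
          ≤ (m.choose n : ℝ) * ε ^ (m - n) := by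
        simpa using IH (fun j => l j.castSucc) hinj' ε hε (fun j => hb _) m
          (le_trans (Nat.le_succ n) hm)
      have e1 : m - (n+1) + 1 = m - n := by omega
      have e2 : m + 1 - (n+1) = m - n := by omega
      calc ‖l (Fin.last (n+1))
              * ∑ i, (∏ s ∈ univ.erase i, (l i - l s))⁻¹ * l i ^ m
            + ∑ j : Fin (n+1),
              (∏ s ∈ univ.erase j, (l j.castSucc - l s.castSucc))⁻¹ * l j.castSucc ^ m‖
          ≤ ‖l (Fin.last (n+1))‖
              * ‖∑ i, (∏ s ∈ univ.erase i, (l i - l s))⁻¹ * l i ^ m‖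
            + ‖∑ j : Fin (n+1),
              (∏ s ∈ univ.erase j, (l j.castSucc - l s.castSucc))⁻¹ * l j.castSucc ^ m‖ := by
            refine le_trans (norm_add_le _ _) ?_
            rw [norm_mul]
        _ ≤ ε * ((m.choose (n+1) : ℝ) * ε ^ (m - (n+1))) + (m.choose n : ℝ) * ε ^ (m - n) :=
            add_le_add (mul_le_mul (hb _) ih (norm_nonneg _) hε) h2
        _ = ((m+1).choose (n+1) : ℝ) * ε ^ (m + 1 - (n+1)) := by
            rw [e2, Nat.choose_succ_succ]
            push_cast
            rw [← e1, pow_succ]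
            ring

/-- With `ε = max(|λ₁|, …, |λₙ|)`, `a_q = 1 / ∏_{s ≠ q} (λ_q − λ_s)` and
`B_{n,q} = ∑_i a_i λ_i^{n-1+q}`, for every `q ≥ 1` and every real `x`:
`|B_{n,q} x^{n-1+q}/(n-1+q)!| ≤ ε^q |x|^{n-1+q}/(n-1)!`. -/
theorem stmt7 (n : ℕ) (hn : 1 ≤ n) (l : Fin n → ℂ) (hl : Function.Injective l)
    (ε : ℝ) (hε : IsGreatest (Set.range fun i => ‖l i‖) ε)
    (a : Fin n → ℂ)
    (ha : ∀ q, a q = (∏ s ∈ Finset.univ.erase q, (l q - l s))⁻¹)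
    (q : ℕ) (hq : 1 ≤ q) (x : ℝ) :
    ‖(∑ i, a i * l i ^ (n - 1 + q)) * (x : ℂ) ^ (n - 1 + q) /
        ((n - 1 + q).factorial : ℂ)‖
      ≤ ε ^ q * |x| ^ (n - 1 + q) / ((n - 1).factorial : ℝ) := by
  obtain ⟨n', rfl⟩ : ∃ n', n = n' + 1 := ⟨n - 1, by omega⟩
  have en : n' + 1 - 1 = n' := by omega
  obtain ⟨i0, hi0⟩ := hε.1
  have hε0 : 0 ≤ ε := hi0 ▸ norm_nonneg _
  have hb : ∀ i, ‖l i‖ ≤ ε := fun i => hε.2 ⟨i, rfl⟩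
  simp only [ha, en]
  set m := n' + q with hm
  have hkey := key_s7 n' l hl ε hε0 hb m (by omega)
  have e4 : m - n' = q := by omega
  rw [e4] at hkey
  have habs : ‖(∑ i, (∏ s ∈ Finset.univ.erase i, (l i - l s))⁻¹ * l i ^ m)
        * (x:ℂ) ^ m / ((m.factorial : ℂ))‖
      = ‖∑ i, (∏ s ∈ Finset.univ.erase i, (l i - l s))⁻¹ * l i ^ m‖
        * |x| ^ m / (m.factorial : ℝ) := by
    rw [norm_div, norm_mul, norm_pow, Complex.norm_real, Real.norm_eq_abs, Complex.norm_natCast]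
  rw [habs]
  have h5 := Nat.choose_mul_factorial_mul_factorial (show n' ≤ m by omega)
  rw [e4] at h5
  have hnat : m.choose n' * n'.factorial ≤ m.factorial := by
    calc m.choose n' * n'.factorial
        ≤ m.choose n' * n'.factorial * q.factorial :=
          Nat.le_mul_of_pos_right _ q.factorial_pos
      _ = m.factorial := h5
  have hfac : (0:ℝ) < (m.factorial : ℝ) := by exact_mod_cast m.factorial_pos
  have hfac' : (0:ℝ) < (n'.factorial : ℝ) := by exact_mod_cast n'.factorial_pos
  rw [div_le_div_iff₀ hfac hfac']
  calc ‖∑ i, (∏ s ∈ Finset.univ.erase i, (l i - l s))⁻¹ * l i ^ m‖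
        * |x| ^ m * (n'.factorial : ℝ)
      ≤ ((m.choose n' : ℝ) * ε ^ q) * |x| ^ m * (n'.factorial : ℝ) := by
        gcongr
    _ = (ε ^ q * |x| ^ m) * ((m.choose n' : ℝ) * (n'.factorial : ℝ)) := by ring
    _ ≤ (ε ^ q * |x| ^ m) * (m.factorial : ℝ) := by
        apply mul_le_mul_of_nonneg_left _
          (mul_nonneg (pow_nonneg hε0 q) (pow_nonneg (abs_nonneg x) m))
        exact_mod_cast hnat
    _ = ε ^ q * |x| ^ m * (m.factorial : ℝ) := by ring
end

section
/- Let λ₁, …, λₙ be n mutually distinct complex numbers with ε = max(|λ₁|, …, |λₙ|), and let B_{n,q} = ∑_{i=1}^{n} a_i λᵢ^{n−1+q} where a_q = 1 / ∏_{s ≠ q} (λ_q − λ_s). Then for every q ≥ 1, the L²-norm over [−π, π] of the function x ↦ B_{n,q} x^{n−1+q}/(n−1+q)! satisfies ‖B_{n,q} x^{n−1+q}/(n−1+q)!‖_{L²([−π,π])} ≤ C_n (π ε)^q, where C_n = √(2π/(2n+1)) · π^{n−1}/(n−1)!. -/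
open MeasureTheory

/-- The L² norm on the interval `[-π, π]`: `‖g‖ = (∫_{-π}^{π} |g(x)|² dx)^{1/2}`. -/
noncomputable def L2norm (g : ℝ → ℂ) : ℝ :=
  Real.sqrt (∫ x in Set.Icc (-Real.pi) Real.pi, ‖g x‖ ^ 2)

/-- Divided-difference type sum: `∑_{x ∈ T} x^m / ∏_{y ∈ T, y ≠ x} (x - y)`. -/
noncomputable def DD (T : Finset ℂ) (m : ℕ) : ℂ :=
  ∑ x ∈ T, x ^ m * (∏ y ∈ T.erase x, (x - y))⁻¹

/-- Leibniz-type recurrence for divided differences of monomials. -/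
lemma leib (T : Finset ℂ) {a : ℂ} (ha : a ∈ T) (m : ℕ) :
    DD T (m + 1) = a * DD T m + DD (T.erase a) m := by
  have key : DD T (m + 1) - a * DD T m = DD (T.erase a) m := by
    have h1 : DD T (m + 1) - a * DD T m
        = ∑ x ∈ T, (x - a) * (x ^ m * (∏ y ∈ T.erase x, (x - y))⁻¹) := by
      rw [DD, DD, Finset.mul_sum, ← Finset.sum_sub_distrib]
      exact Finset.sum_congr rfl fun x _ => by ring
    rw [h1, ← Finset.add_sum_erase _ _ ha, sub_self, zero_mul, zero_add]
    refine Finset.sum_congr rfl fun x hx => ?_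
    have hxa : x ≠ a := (Finset.mem_erase.mp hx).1
    have haex : a ∈ T.erase x := Finset.mem_erase.mpr ⟨Ne.symm hxa, ha⟩
    have hprod : ∏ y ∈ T.erase x, (x - y)
        = (x - a) * ∏ y ∈ (T.erase x).erase a, (x - y) :=
      (Finset.mul_prod_erase _ _ haex).symm
    have hcomm : (T.erase x).erase a = (T.erase a).erase x := Finset.erase_right_comm
    have h0 : x - a ≠ 0 := sub_ne_zero.mpr hxa
    rw [hprod, hcomm, mul_inv]
    calc (x - a) * (x ^ m * ((x - a)⁻¹ * (∏ y ∈ (T.erase a).erase x, (x - y))⁻¹))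
        = x ^ m * ((x - a) * ((x - a)⁻¹ * (∏ y ∈ (T.erase a).erase x, (x - y))⁻¹)) := by
          ring
      _ = x ^ m * (∏ y ∈ (T.erase a).erase x, (x - y))⁻¹ := by
          rw [mul_inv_cancel_left₀ h0]
  linear_combination key

/-- For `m < |T|`, the divided difference of `x^m` is `0`, except `1` at `m = |T| - 1`. -/
lemma Ddeg : ∀ (T : Finset ℂ) (m : ℕ), m < T.card →
    DD T m = if m = T.card - 1 then 1 else 0 := by
  intro T
  induction T using Finset.strongInduction with
  | _ T IH =>
    intro m hm
    by_cases hc : T.card = 1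
    · obtain ⟨x, rfl⟩ := Finset.card_eq_one.mp hc
      have hm0 : m = 0 := by omega
      subst hm0
      simp [DD, hc]
    · have hc2 : 2 ≤ T.card := by omega
      obtain ⟨aa, haT, b, hbT, hab⟩ := Finset.one_lt_card.mp (show 1 < T.card by omega)
      have key : ∀ k, (aa - b) * DD T k = DD (T.erase b) k - DD (T.erase aa) k := by
        intro k
        have h1 := leib T haT k
        have h2 := leib T hbT k
        linear_combination h2 - h1
      have hzero : ∀ k, k < T.card - 1 → DD T k = 0 := by
        intro k hk
        have hea := IH (T.erase aa) (Finset.erase_ssubset haT) k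
          (by rw [Finset.card_erase_of_mem haT]; omega)
        have heb := IH (T.erase b) (Finset.erase_ssubset hbT) k
          (by rw [Finset.card_erase_of_mem hbT]; omega)
        rw [Finset.card_erase_of_mem haT] at hea
        rw [Finset.card_erase_of_mem hbT] at heb
        have h0 : (aa - b) * DD T k = 0 := by rw [key k, hea, heb, sub_self]
        rcases mul_eq_zero.mp h0 with h | h
        · exact absurd (sub_eq_zero.mp h) hab
        · exact h
      by_cases hm1 : m = T.card - 1
      · rw [if_pos hm1]
        have hm2 : m = (T.card - 2) + 1 := by omega
        rw [hm2, leib T haT]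
        have h1 : DD T (T.card - 2) = 0 := hzero _ (by omega)
        have h2 : DD (T.erase aa) (T.card - 2) = 1 := by
          have := IH (T.erase aa) (Finset.erase_ssubset haT) (T.card - 2)
            (by rw [Finset.card_erase_of_mem haT]; omega)
          rw [Finset.card_erase_of_mem haT] at this
          rw [this, if_pos (by omega)]
        rw [h1, h2]; ring
      · rw [if_neg hm1]
        exact hzero m (by omega)

/-- Binomial bound for divided differences of monomials. -/
lemma Dbound : ∀ (q : ℕ) (T : Finset ℂ) (ε : ℝ),
    (∀ x ∈ T, ‖x‖ ≤ ε) → T.Nonempty →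
    ‖DD T (T.card - 1 + q)‖ ≤ ((T.card - 1 + q).choose q : ℝ) * ε ^ q := by
  intro q
  induction q with
  | zero =>
    intro T ε hb hne
    have h1 : 1 ≤ T.card := Finset.card_pos.mpr hne
    rw [Nat.add_zero, Ddeg T _ (by omega), if_pos rfl]
    simp
  | succ q IHq =>
    intro T
    induction T using Finset.strongInduction with
    | _ T IH =>
      intro ε hb hne
      obtain ⟨aa, haT⟩ := hne
      have hε0 : 0 ≤ ε := le_trans (norm_nonneg _) (hb aa haT)
      have hcard1 : 1 ≤ T.card := Finset.card_pos.mpr ⟨aa, haT⟩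
      have hstep : T.card - 1 + (q + 1) = (T.card - 1 + q) + 1 := by omega
      rw [hstep, leib T haT]
      have h1 : ‖aa * DD T (T.card - 1 + q)‖
          ≤ ε * (((T.card - 1 + q).choose q : ℝ) * ε ^ q) := by
        rw [norm_mul]
        exact mul_le_mul (hb aa haT) (IHq T ε hb ⟨aa, haT⟩) (norm_nonneg _) hε0
      have h2 : ‖DD (T.erase aa) (T.card - 1 + q)‖
          ≤ ((T.card - 1 + q).choose (q + 1) : ℝ) * ε ^ (q + 1) := by
        by_cases hne' : (T.erase aa).Nonempty
        · have hc2 : 2 ≤ T.card := by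
            have := Finset.card_pos.mpr hne'
            rw [Finset.card_erase_of_mem haT] at this; omega
          have := IH (T.erase aa) (Finset.erase_ssubset haT) ε
            (fun x hx => hb x (Finset.mem_of_mem_erase hx)) hne'
          rw [Finset.card_erase_of_mem haT] at this
          have he : T.card - 1 - 1 + (q + 1) = T.card - 1 + q := by omega
          rw [he] at this
          exact this
        · rw [Finset.not_nonempty_iff_eq_empty] at hne'
          rw [hne']
          simp [DD]
          positivity
      calc ‖aa * DD T (T.card - 1 + q) + DD (T.erase aa) (T.card - 1 + q)‖
          ≤ ‖aa * DD T (T.card - 1 + q)‖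
            + ‖DD (T.erase aa) (T.card - 1 + q)‖ := norm_add_le _ _
        _ ≤ ε * (((T.card - 1 + q).choose q : ℝ) * ε ^ q)
            + ((T.card - 1 + q).choose (q + 1) : ℝ) * ε ^ (q + 1) := add_le_add h1 h2
        _ = (((T.card - 1 + q).choose q : ℝ) + ((T.card - 1 + q).choose (q + 1) : ℝ))
            * ε ^ (q + 1) := by ring
        _ = ((T.card - 1 + (q + 1)).choose (q + 1) : ℝ) * ε ^ (q + 1) := by
            rw [hstep, Nat.choose_succ_succ]
            push_cast
            ring

/-- L² norm of a monomial with complex coefficient over `[-π, π]`. -/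
lemma L2norm_monomial (c : ℂ) (M : ℕ) :
    L2norm (fun x : ℝ => c * (x:ℂ) ^ M / (M.factorial : ℂ))
      = (‖c‖ / M.factorial)
        * Real.sqrt (2 * Real.pi ^ (2*M+1) / (2*M+1)) := by
  have hπ := Real.pi_pos
  have hnorm : ∀ x : ℝ, ‖c * (x:ℂ) ^ M / (M.factorial : ℂ)‖ ^ 2
      = (‖c‖ / M.factorial) ^ 2 * x ^ (2*M) := by
    intro x
    rw [norm_div, norm_mul, norm_pow, Complex.norm_real, Complex.norm_natCast,
      div_pow, mul_pow,
      show (‖x‖ ^ M) ^ 2 = x ^ (2*M) by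
        rw [← pow_mul, mul_comm M 2, pow_mul, Real.norm_eq_abs, sq_abs, ← pow_mul]]
    ring
  have hI : ∫ x in Set.Icc (-Real.pi) Real.pi, x ^ (2*M)
      = 2 * Real.pi ^ (2*M+1) / (2*M+1) := by
    rw [MeasureTheory.integral_Icc_eq_integral_Ioc,
      ← intervalIntegral.integral_of_le (by linarith : -Real.pi ≤ Real.pi),
      integral_pow, Odd.neg_pow ⟨M, by ring⟩]
    push_cast
    ring
  rw [L2norm]
  simp_rw [hnorm]
  rw [MeasureTheory.integral_const_mul, hI, Real.sqrt_mul (by positivity),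
    Real.sqrt_sq (by positivity)]

/-- With `ε = max(|λ₁|, …, |λₙ|)`, `a_q = 1 / ∏_{s ≠ q} (λ_q − λ_s)` and
`B_{n,q} = ∑_i a_i λ_i^{n-1+q}`, for every `q ≥ 1` the L²-norm over `[-π, π]` of
`x ↦ B_{n,q} x^{n-1+q}/(n-1+q)!` is at most `C_n (π ε)^q`, where
`C_n = √(2π/(2n+1)) · π^{n-1}/(n-1)!`. -/
theorem stmt8 (n : ℕ) (hn : 1 ≤ n) (l : Fin n → ℂ) (hl : Function.Injective l)
    (ε : ℝ) (hε : IsGreatest (Set.range fun i => ‖l i‖) ε)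
    (a : Fin n → ℂ)
    (ha : ∀ q, a q = (∏ s ∈ Finset.univ.erase q, (l q - l s))⁻¹)
    (q : ℕ) (hq : 1 ≤ q) :
    L2norm (fun x : ℝ => (∑ i, a i * l i ^ (n - 1 + q)) * (x : ℂ) ^ (n - 1 + q) /
        ((n - 1 + q).factorial : ℂ))
      ≤ (Real.sqrt (2 * Real.pi / (2 * n + 1)) * Real.pi ^ (n - 1) /
          ((n - 1).factorial : ℝ)) * (Real.pi * ε) ^ q := by
  have hπ := Real.pi_pos
  set M := n - 1 + q with hM
  set c : ℂ := ∑ i, a i * l i ^ M with hcdef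
  set T : Finset ℂ := Finset.image l Finset.univ with hT
  have hTcard : T.card = n := by
    rw [hT, Finset.card_image_of_injective _ hl, Finset.card_univ, Fintype.card_fin]
  have hsum : c = DD T M := by
    rw [hcdef, hT, DD, Finset.sum_image (fun i _ j _ h => hl h)]
    refine Finset.sum_congr rfl fun i _ => ?_
    rw [ha i, ← Finset.image_erase hl, Finset.prod_image
      (fun s hs t ht h => hl h), mul_comm]
  have hne : T.Nonempty := ⟨l ⟨0, hn⟩, Finset.mem_image_of_mem l (Finset.mem_univ _)⟩
  have hb : ∀ x ∈ T, ‖x‖ ≤ ε := by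
    intro x hx
    obtain ⟨i, _, rfl⟩ := Finset.mem_image.mp hx
    exact hε.2 ⟨i, rfl⟩
  have hc : ‖c‖ ≤ (M.choose q : ℝ) * ε ^ q := by
    have := Dbound q T ε hb hne
    rwa [hTcard, ← hsum] at this
  have hε0 : 0 ≤ ε := by
    obtain ⟨i, hi⟩ := hε.1
    exact hi ▸ norm_nonneg _
  rw [L2norm_monomial c M]
  -- split the square root
  have hsq : Real.sqrt (2 * Real.pi ^ (2*M+1) / (2*M+1))
      = Real.sqrt (2 * Real.pi / (2*M+1)) * Real.pi ^ M := by
    have e1 : 2 * Real.pi ^ (2*M+1) / (2*M+1 : ℝ)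
        = (2 * Real.pi / (2*M+1)) * (Real.pi ^ M) ^ 2 := by
      rw [show 2*M+1 = M*2+1 from by ring, pow_succ, pow_mul]
      ring
    rw [e1, Real.sqrt_mul (by positivity), Real.sqrt_sq (by positivity)]
  rw [hsq]
  -- key numeric inequalities
  have hmn : n ≤ M := by omega
  have hnM : (n:ℝ) ≤ (M:ℝ) := Nat.cast_le.mpr hmn
  have s1 : Real.sqrt (2 * Real.pi / (2*(M:ℝ)+1)) ≤ Real.sqrt (2 * Real.pi / (2*(n:ℝ)+1)) := by
    apply Real.sqrt_le_sqrt
    gcongr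
  have hfac : (M.choose q : ℝ) * ((n-1).factorial : ℝ) ≤ (M.factorial : ℝ) := by
    have h := Nat.choose_mul_factorial_mul_factorial (show q ≤ M by omega)
    have hMq : M - q = n - 1 := by omega
    rw [hMq] at h
    have hN : M.choose q * (n-1).factorial ≤ M.factorial := by
      calc M.choose q * (n-1).factorial
          ≤ M.choose q * q.factorial * (n-1).factorial := by
            have := q.factorial_pos
            nlinarith
        _ = M.factorial := h
    exact_mod_cast hN
  have s2 : ‖c‖ / (M.factorial : ℝ) ≤ ε ^ q / ((n-1).factorial : ℝ) := by
    rw [div_le_div_iff₀ (by positivity) (by positivity)]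
    calc ‖c‖ * ((n-1).factorial : ℝ)
        ≤ ((M.choose q : ℝ) * ε ^ q) * ((n-1).factorial : ℝ) := by
          have : (0:ℝ) ≤ ((n-1).factorial : ℝ) := by positivity
          nlinarith
      _ = ε ^ q * ((M.choose q : ℝ) * ((n-1).factorial : ℝ)) := by ring
      _ ≤ ε ^ q * (M.factorial : ℝ) := by
          have : (0:ℝ) ≤ ε ^ q := by positivity
          nlinarith
  have main : ‖c‖ / (M.factorial : ℝ) * Real.sqrt (2 * Real.pi / (2*(M:ℝ)+1))
      ≤ ε ^ q / ((n-1).factorial : ℝ) * Real.sqrt (2 * Real.pi / (2*(n:ℝ)+1)) :=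
    mul_le_mul s2 s1 (Real.sqrt_nonneg _) (by positivity)
  have hrhs : Real.sqrt (2 * Real.pi / (2*(n:ℝ)+1)) * Real.pi ^ (n - 1) /
        ((n - 1).factorial : ℝ) * (Real.pi * ε) ^ q
      = (ε ^ q / ((n-1).factorial : ℝ) * Real.sqrt (2 * Real.pi / (2*(n:ℝ)+1)))
        * Real.pi ^ M := by
    rw [mul_pow, hM, pow_add]
    ring
  rw [hrhs]
  calc ‖c‖ / (M.factorial : ℝ)
        * (Real.sqrt (2 * Real.pi / (2*(M:ℝ)+1)) * Real.pi ^ M)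
      = (‖c‖ / (M.factorial : ℝ) * Real.sqrt (2 * Real.pi / (2*(M:ℝ)+1)))
        * Real.pi ^ M := by ring
    _ ≤ (ε ^ q / ((n-1).factorial : ℝ) * Real.sqrt (2 * Real.pi / (2*(n:ℝ)+1)))
        * Real.pi ^ M := mul_le_mul_of_nonneg_right main (by positivity)
end

section
/- Let λ₁, …, λₙ be n mutually distinct complex numbers, a_q = 1 / ∏_{s ≠ q} (λ_q − λ_s), B_{n,q} = ∑_{i=1}^{n} a_i λᵢ^{n−1+q}, and f_n(x) = a₁ e^{λ₁ x} + ⋯ + aₙ e^{λₙ x}. Then for every real x the function f_n has the convergent power series expansion f_n(x) = x^{n−1}/(n−1)! + ∑_{q=1}^{∞} B_{n,q} x^{n−1+q}/(n−1+q)!. -/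
open Polynomial Lagrange Finset in
lemma lagrange_basis_eq_C_mul_nodal {F : Type*} [Field F] {ι : Type*} [DecidableEq ι]
    (s : Finset ι) (v : ι → F) (i : ι) :
    Lagrange.basis s v i = C (nodalWeight s v i) * nodal (s.erase i) v := by
  simp_rw [Lagrange.basis, basisDivisor, nodalWeight, nodal, prod_mul_distrib, map_prod]

open Polynomial Lagrange Finset in
lemma stmt9_key (n : ℕ) (hn : 1 ≤ n) (l : Fin n → ℂ) (hl : Function.Injective l)
    (a : Fin n → ℂ)
    (ha : ∀ q, a q = (∏ s ∈ Finset.univ.erase q, (l q - l s))⁻¹)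
    (m : ℕ) (hm : m < n) :
    ∑ i, a i * l i ^ m = if m = n - 1 then 1 else 0 := by
  have hinj : Set.InjOn l (Finset.univ : Finset (Fin n)) := fun p _ q _ h => hl h
  have hX : (X ^ m : ℂ[X]) = interpolate Finset.univ l (fun i => eval (l i) (X ^ m)) :=
    eq_interpolate hinj
      (by rw [degree_X_pow]; simp only [Finset.card_univ, Fintype.card_fin]; exact_mod_cast hm)
  simp only [eval_pow, eval_X] at hX
  have hcoeff := congrArg (fun p : ℂ[X] => p.coeff (n - 1)) hX
  simp only [interpolate_apply, finset_sum_coeff, coeff_X_pow] at hcoeff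
  have hna : ∀ i, a i = nodalWeight Finset.univ l i := by
    intro i
    rw [ha, nodalWeight, Finset.prod_inv_distrib]
  rw [show ((if n - 1 = m then (1:ℂ) else 0) = if m = n-1 then 1 else 0) by
    by_cases h : m = n - 1 <;> simp [h, Ne.symm, eq_comm]] at hcoeff
  rw [hcoeff]
  apply Finset.sum_congr rfl
  intro i _
  rw [lagrange_basis_eq_C_mul_nodal, hna]
  simp only [coeff_C_mul]
  have hmono : (nodal ((Finset.univ : Finset (Fin n)).erase i) l).Monic := nodal_monic
  have hdeg : (nodal ((Finset.univ : Finset (Fin n)).erase i) l).natDegree = n - 1 := by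
    rw [natDegree_nodal, Finset.card_erase_of_mem (Finset.mem_univ i), Finset.card_univ,
      Fintype.card_fin]
  rw [← hdeg, hmono.coeff_natDegree]
  ring

/-- With `a_q = 1 / ∏_{s ≠ q} (λ_q − λ_s)`, `B_{n,q} = ∑_i a_i λ_i^{n-1+q}` and
`f_n(x) = ∑_i a_i e^{λ_i x}`, for every real `x` one has the convergent expansion
`f_n(x) = x^{n-1}/(n-1)! + ∑_{q=1}^∞ B_{n,q} x^{n-1+q}/(n-1+q)!`. -/
theorem stmt9 (n : ℕ) (hn : 1 ≤ n) (l : Fin n → ℂ) (hl : Function.Injective l)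
    (a : Fin n → ℂ)
    (ha : ∀ q, a q = (∏ s ∈ Finset.univ.erase q, (l q - l s))⁻¹)
    (B : ℕ → ℂ)
    (hB : ∀ q, B q = ∑ i, a i * l i ^ (n - 1 + q))
    (x : ℝ) :
    HasSum (fun q : ℕ => B (q + 1) * (x : ℂ) ^ (n - 1 + (q + 1)) /
        ((n - 1 + (q + 1)).factorial : ℂ))
      ((∑ i, a i * Complex.exp (l i * x)) -
        (x : ℂ) ^ (n - 1) / ((n - 1).factorial : ℂ)) := by
  set c : ℕ → ℂ := fun m => ∑ i, a i * l i ^ m with hc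
  set g : ℕ → ℂ := fun m => c m * (x : ℂ) ^ m / (m.factorial : ℂ) with hg
  have hstep : ∀ i : Fin n,
      HasSum (fun m : ℕ => a i * ((l i * x) ^ m / (m.factorial : ℂ)))
        (a i * Complex.exp (l i * x)) := by
    intro i
    have h := NormedSpace.expSeries_div_hasSum_exp (l i * x)
    rw [← Complex.exp_eq_exp_ℂ] at h
    exact h.mul_left _
  have hsum : HasSum g (∑ i, a i * Complex.exp (l i * x)) := by
    have h := hasSum_sum (f := fun (i : Fin n) (m : ℕ) =>
      a i * ((l i * x) ^ m / (m.factorial : ℂ)))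
      (fun i (_ : i ∈ Finset.univ) => hstep i)
    convert h using 2 with m
    rw [hg, hc]
    simp only [mul_pow, Finset.sum_mul, mul_div_assoc]
    rw [Finset.sum_div]
    congr 1 with i
    ring
  have hT : ∑ m ∈ Finset.range n, g m = (x : ℂ) ^ (n - 1) / ((n - 1).factorial : ℂ) := by
    rw [Finset.sum_eq_single (n - 1)]
    · rw [hg]
      simp only []
      rw [show c (n - 1) = 1 by
        rw [hc]; simpa using stmt9_key n hn l hl a ha (n - 1) (by omega), one_mul]
    · intro m hm hne
      rw [Finset.mem_range] at hm
      rw [hg]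
      simp only []
      rw [show c m = 0 by rw [hc]; simpa [hne] using stmt9_key n hn l hl a ha m hm]
      simp
    · intro h
      exact absurd (Finset.mem_range.mpr (by omega)) h
  have htail : HasSum (fun q : ℕ => g (q + n))
      ((∑ i, a i * Complex.exp (l i * x)) - (x : ℂ) ^ (n - 1) / ((n - 1).factorial : ℂ)) := by
    rw [hasSum_nat_add_iff n, ← hT]
    convert hsum using 1
    · rfl
    ring
  convert htail using 2 with q
  have hq : n - 1 + (q + 1) = q + n := by omega
  rw [hq, hg]
  simp only []
  congr 2
  rw [hB, hc, hq]
end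

section
/- Let λ₁, …, λₙ be n mutually distinct complex numbers with ε = max(|λ₁|, …, |λₙ|) satisfying π ε < 1/2, let a_q = 1 / ∏_{s ≠ q} (λ_q − λ_s), and f_n(x) = a₁ e^{λ₁ x} + ⋯ + aₙ e^{λₙ x}. Then ‖f_n(x) − x^{n−1}/(n−1)!‖_{L²([−π,π])} ≤ 2 C_n π ε, where C_n = √(2π/(2n+1)) · π^{n−1}/(n−1)!. -/
open MeasureTheory Finset intervalIntegral Polynomial

noncomputable def cA (l : ℕ → ℂ) (n q : ℕ) : ℂ :=
  (∏ s ∈ (Finset.range n).erase q, (l q - l s))⁻¹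

noncomputable def cf (l : ℕ → ℂ) (n : ℕ) (x : ℝ) : ℂ :=
  ∑ q ∈ Finset.range n, cA l n q * Complex.exp (l q * x)

lemma leadingCoeff_lagrange_basis {F : Type*} [Field F] {ι : Type*} [DecidableEq ι]
    (s : Finset ι) (v : ι → F) (i : ι) (hvs : Set.InjOn v s) (hi : i ∈ s) :
    (Lagrange.basis s v i).leadingCoeff = Lagrange.nodalWeight s v i := by
  rw [Lagrange.basis, Polynomial.leadingCoeff_prod, Lagrange.nodalWeight]
  refine Finset.prod_congr rfl fun j hj => ?_
  rw [Lagrange.basisDivisor, leadingCoeff_mul, leadingCoeff_C, leadingCoeff_X_sub_C, mul_one]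

lemma sum_nodalWeight_eq_zero {F : Type*} [Field F] {ι : Type*} [DecidableEq ι]
    (s : Finset ι) (v : ι → F) (hvs : Set.InjOn v s) (hs : 2 ≤ s.card) :
    ∑ i ∈ s, Lagrange.nodalWeight s v i = 0 := by
  have h1 := Lagrange.sum_basis hvs (Finset.card_pos.mp (by omega))
  have h2 : ∀ i ∈ s, (Lagrange.basis s v i).coeff (s.card - 1) = Lagrange.nodalWeight s v i := by
    intro i hi
    rw [← Lagrange.natDegree_basis hvs hi, ← Polynomial.leadingCoeff,
      leadingCoeff_lagrange_basis s v i hvs hi]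
  calc ∑ i ∈ s, Lagrange.nodalWeight s v i
      = ∑ i ∈ s, (Lagrange.basis s v i).coeff (s.card - 1) :=
        (Finset.sum_congr rfl h2).symm
    _ = (∑ i ∈ s, Lagrange.basis s v i).coeff (s.card - 1) :=
        (Polynomial.finset_sum_coeff _ _ _).symm
    _ = (1 : F[X]).coeff (s.card - 1) := by rw [h1]
    _ = 0 := by rw [Polynomial.coeff_one]; simp; omega

lemma cA_eq_nodalWeight (l : ℕ → ℂ) (n q : ℕ) :
    cA l n q = Lagrange.nodalWeight (Finset.range n) l q := by
  rw [cA, Lagrange.nodalWeight, ← Finset.prod_inv_distrib]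

lemma sum_cA (l : ℕ → ℂ) (n : ℕ) (hn : 2 ≤ n) (hinj : Set.InjOn l (Finset.range n)) :
    ∑ q ∈ Finset.range n, cA l n q = 0 := by
  simp_rw [cA_eq_nodalWeight]
  exact sum_nodalWeight_eq_zero _ _ hinj (by simpa using hn)

lemma cA_succ (l : ℕ → ℂ) (n q : ℕ) (hq : q < n) :
    cA l (n+1) q = (l q - l n)⁻¹ * cA l n q := by
  rw [cA, cA, Finset.range_add_one, Finset.erase_insert_of_ne (by omega : (n:ℕ) ≠ q),
    Finset.prod_insert (fun h => by simpa using (Finset.mem_of_mem_erase h)), mul_inv]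

lemma cf_succ (l : ℕ → ℂ) (n : ℕ) (hn : 1 ≤ n)
    (hinj : Set.InjOn l (Finset.range (n+1))) (x : ℝ) :
    cf l (n+1) x = ∫ t in (0:ℝ)..x, Complex.exp (l n * (x - t)) * cf l n t := by
  have key : ∀ q < n, (∫ t in (0:ℝ)..x, Complex.exp (l n * (x - t)) * Complex.exp (l q * t))
      = (Complex.exp (l q * x) - Complex.exp (l n * x)) / (l q - l n) := by
    intro q hq
    have hc : (l q : ℂ) - l n ≠ 0 := by
      refine sub_ne_zero.mpr fun h => ?_
      have := hinj (by simp; omega) (by simp) h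
      omega
    have e1 : ∀ t : ℝ, Complex.exp (l n * (x - t)) * Complex.exp (l q * t)
        = Complex.exp (l n * x) * Complex.exp ((l q - l n) * t) := by
      intro t
      rw [← Complex.exp_add, ← Complex.exp_add]
      push_cast
      ring_nf
    simp_rw [e1]
    rw [intervalIntegral.integral_const_mul, integral_exp_mul_complex hc]
    have e2 : Complex.exp (l n * x) * Complex.exp ((l q - l n) * x) = Complex.exp (l q * x) := by
      rw [← Complex.exp_add]; ring_nf
    push_cast
    rw [mul_zero, Complex.exp_zero, mul_div_assoc', mul_sub, mul_one, e2]
  have e3 : ∀ t : ℝ, Complex.exp (l n * (x - t)) * cf l n t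
      = ∑ q ∈ Finset.range n, cA l n q * (Complex.exp (l n * (x - t)) * Complex.exp (l q * t)) := by
    intro t
    rw [cf, Finset.mul_sum]
    exact Finset.sum_congr rfl fun q _ => by ring
  simp_rw [e3]
  rw [intervalIntegral.integral_finset_sum]
  · have e4 : ∀ q ∈ Finset.range n,
        (∫ t in (0:ℝ)..x, cA l n q * (Complex.exp (l n * (x - t)) * Complex.exp (l q * t)))
        = cA l (n+1) q * Complex.exp (l q * x) - cA l (n+1) q * Complex.exp (l n * x) := by
      intro q hq
      rw [Finset.mem_range] at hq
      rw [intervalIntegral.integral_const_mul, key q hq, cA_succ l n q hq]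
      have hc : (l q : ℂ) - l n ≠ 0 := by
        refine sub_ne_zero.mpr fun h => ?_
        have := hinj (by simp; omega) (by simp) h
        omega
      field_simp
    rw [Finset.sum_congr rfl e4, Finset.sum_sub_distrib, ← Finset.sum_mul]
    have e5 : ∑ q ∈ Finset.range n, cA l (n+1) q = - cA l (n+1) n := by
      have := sum_cA l (n+1) (by omega) hinj
      rw [Finset.sum_range_succ] at this
      linear_combination this
    rw [e5, cf, Finset.sum_range_succ]
    ring
  · intro q hq
    exact (Continuous.intervalIntegrable (by continuity) _ _)

lemma cf_continuous (l : ℕ → ℂ) (n : ℕ) : Continuous (cf l n) := by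
  unfold cf
  refine continuous_finset_sum _ fun q _ => ?_
  exact continuous_const.mul (Complex.continuous_exp.comp (continuous_const.mul Complex.continuous_ofReal))

lemma norm_cexp_le (w : ℂ) : ‖Complex.exp w‖ ≤ Real.exp (‖w‖) := by
  rw [Complex.norm_exp]
  exact Real.exp_le_exp.mpr ((le_abs_self w.re).trans (Complex.abs_re_le_norm w))

lemma norm_cexp_sub_one_le (z : ℂ) : ‖Complex.exp z - 1‖ ≤ ‖z‖ * Real.exp (‖z‖) := by
  rcases eq_or_ne z 0 with rfl | hz
  · simp
  · have h := integral_exp_mul_complex (a := (0:ℝ)) (b := 1) hz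
    have h2 : Complex.exp z - 1 = z * ∫ x in (0:ℝ)..1, Complex.exp (z * x) := by
      rw [h]; field_simp; simp
    rw [h2, norm_mul]
    gcongr
    calc ‖∫ x in (0:ℝ)..1, Complex.exp (z * x)‖
        ≤ Real.exp (‖z‖) * |1 - 0| :=
          norm_integral_le_of_norm_le_const (fun x hx => by
            rw [Set.uIoc_of_le (by norm_num)] at hx
            calc ‖Complex.exp (z * x)‖ ≤ Real.exp (‖z * x‖) := norm_cexp_le _
              _ ≤ Real.exp (‖z‖) := by
                  rw [Real.exp_le_exp, norm_mul, Complex.norm_real, Real.norm_eq_abs]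
                  rw [abs_of_pos hx.1]
                  nlinarith [hx.1.le, hx.2, norm_nonneg z])
      _ = Real.exp (‖z‖) := by norm_num

lemma integral_abs_pow (m : ℕ) (x : ℝ) :
    ∫ t in (0:ℝ)..x, |t| ^ m = x * |x| ^ m / (m + 1) := by
  rcases le_total 0 x with hx | hx
  · rw [abs_of_nonneg hx]
    rw [intervalIntegral.integral_congr (g := fun t => t ^ m)]
    · rw [integral_pow]; ring
    · intro t ht
      rw [Set.uIcc_of_le hx] at ht
      simp only [abs_of_nonneg ht.1]
  · rw [abs_of_nonpos hx]
    rw [intervalIntegral.integral_congr (g := fun t => (-t) ^ m)]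
    · rw [intervalIntegral.integral_comp_neg (fun t => t ^ m), neg_zero, integral_pow]
      ring
    · intro t ht
      rw [Set.uIcc_of_ge hx] at ht
      simp only [abs_of_nonpos ht.2]

set_option maxHeartbeats 1000000 in
lemma keybound (n : ℕ) (hn : 1 ≤ n) (l : ℕ → ℂ) (hinj : Set.InjOn l (Finset.range n))
    (b : ℝ) (hb : ∀ i < n, ‖l i‖ ≤ b) (x : ℝ) :
    ‖cf l n x - (x:ℂ)^(n-1) / ((n-1).factorial : ℂ)‖
      ≤ b * |x|^n / (n-1).factorial * Real.exp (b * |x|) := by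
  induction n, hn using Nat.le_induction generalizing x with
  | base =>
    have h1 : cf l 1 x = Complex.exp (l 0 * x) := by
      simp [cf, cA]
    rw [h1]
    simp only [Nat.sub_self, pow_zero, Nat.factorial_zero, Nat.cast_one, div_one, pow_one]
    have h2 := norm_cexp_sub_one_le (l 0 * x)
    have h3 : ‖l 0 * x‖ ≤ b * |x| := by
      rw [norm_mul, Complex.norm_real, Real.norm_eq_abs]
      exact mul_le_mul_of_nonneg_right (hb 0 one_pos) (abs_nonneg x)
    refine h2.trans ?_
    exact mul_le_mul h3 (Real.exp_le_exp.mpr h3) (Real.exp_nonneg _)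
      ((norm_nonneg _).trans h3)
  | succ n hn IH =>
    have hb0 : 0 ≤ b := (norm_nonneg (l 0)).trans (hb 0 (by omega))
    have hinj' : Set.InjOn l (Finset.range n) := by
      refine hinj.mono ?_
      intro y hy
      simp only [Finset.coe_range, Set.mem_Iio] at hy ⊢
      omega
    have IH' := IH hinj' (fun i hi => hb i (by omega))
    rw [cf_succ l n hn hinj x]
    simp only [Nat.add_sub_cancel]
    -- step A : x^n/n! as an integral
    have hA : (∫ t in (0:ℝ)..x, ((t:ℂ)^(n-1) / ((n-1).factorial : ℂ)))
        = (x:ℂ)^n / (n.factorial : ℂ) := by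
      have e : ∀ t : ℝ, ((t:ℂ)^(n-1) / ((n-1).factorial : ℂ))
          = ((t^(n-1) / ((n-1).factorial : ℝ) : ℝ) : ℂ) := fun t => by push_cast; ring
      simp_rw [e]
      rw [intervalIntegral.integral_ofReal, intervalIntegral.integral_div, integral_pow]
      have hz : (0:ℝ) ^ (n - 1 + 1) = 0 := zero_pow (by omega)
      rw [hz]
      have hnn : n - 1 + 1 = n := by omega
      rw [hnn]
      have hfac : (n.factorial : ℝ) = n * (n-1).factorial := by
        rw [← Nat.mul_factorial_pred (by omega)]
        push_cast
        ring
      have hfacC : (n.factorial : ℂ) = (n : ℂ) * ((n-1).factorial : ℂ) := by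
        rw [← Nat.mul_factorial_pred (show n ≠ 0 by omega)]
        push_cast
        ring
      rw [hfacC]
      push_cast
      have hnne : (n : ℂ) ≠ 0 := Nat.cast_ne_zero.mpr (by omega)
      have hfne : (((n-1).factorial : ℕ) : ℂ) ≠ 0 := Nat.cast_ne_zero.mpr (Nat.factorial_ne_zero _)
      field_simp
      have hc : (((n-1 : ℕ) : ℂ)) + 1 = n := by
        rw [Nat.cast_sub (by omega)]; push_cast; ring
      rw [hc]
      simp [hnne]
    rw [← hA]
    have int1 : IntervalIntegrable (fun t : ℝ => Complex.exp (l n * (x - t)) * cf l n t)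
        MeasureTheory.volume 0 x := by
      exact (Continuous.mul (by fun_prop) (cf_continuous l n)).intervalIntegrable _ _
    have int2 : IntervalIntegrable (fun t : ℝ => ((t:ℂ)^(n-1) / ((n-1).factorial : ℂ)))
        MeasureTheory.volume 0 x := by
      apply Continuous.intervalIntegrable
      exact (Complex.continuous_ofReal.pow _).div_const _
    rw [← intervalIntegral.integral_sub int1 int2]
    set K : ℝ := b * Real.exp (b * |x|) / (n-1).factorial * |x| with hK
    have hK0 : 0 ≤ K := by positivity
    -- pointwise bound
    have hpt : ∀ t ∈ Set.uIoc (0:ℝ) x,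
        ‖Complex.exp (l n * (x - t)) * cf l n t - (t:ℂ)^(n-1) / ((n-1).factorial : ℂ)‖
          ≤ K * |t|^(n-1) := by
      intro t ht
      have habs : |t| + |x - t| = |x| := by
        rcases le_total 0 x with h | h
        · rw [Set.uIoc_of_le h] at ht
          rw [abs_of_pos ht.1, abs_of_nonneg (by linarith [ht.2]), abs_of_nonneg h]
          ring
        · rw [Set.uIoc_of_ge h] at ht
          rw [abs_of_nonpos ht.2, abs_of_nonpos (by linarith [ht.1.le] : x - t ≤ 0),
            abs_of_nonpos h]
          ring
      set A1 : ℂ := Complex.exp (l n * ((x : ℂ) - (t : ℂ)))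
      have hdecomp : A1 * cf l n t - (t:ℂ)^(n-1) / ((n-1).factorial : ℂ)
          = A1 * (cf l n t - (t:ℂ)^(n-1) / ((n-1).factorial : ℂ))
            + (A1 - 1) * ((t:ℂ)^(n-1) / ((n-1).factorial : ℂ)) := by
        ring
      show ‖A1 * cf l n t - (t:ℂ)^(n-1) / ((n-1).factorial : ℂ)‖ ≤ K * |t|^(n-1)
      rw [hdecomp]
      have hr : (0:ℝ) ≤ |t| := abs_nonneg t
      have hs : (0:ℝ) ≤ |x - t| := abs_nonneg _
      have habsA : ‖l n * ((x:ℂ) - (t:ℂ))‖ ≤ b * |x - t| := by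
        rw [norm_mul]
        have : ((x:ℂ) - (t:ℂ)) = ((x - t : ℝ) : ℂ) := by push_cast; ring
        rw [this, Complex.norm_real, Real.norm_eq_abs]
        exact mul_le_mul_of_nonneg_right (hb n (by omega)) hs
      have hA1 : ‖A1‖ ≤ Real.exp (b * |x - t|) :=
        (norm_cexp_le _).trans (Real.exp_le_exp.mpr habsA)
      have hA1m : ‖A1 - 1‖ ≤ b * |x - t| * Real.exp (b * |x - t|) := by
        refine (norm_cexp_sub_one_le _).trans ?_
        exact mul_le_mul habsA (Real.exp_le_exp.mpr habsA) (Real.exp_nonneg _)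
          (by positivity)
      have hg : ‖cf l n t - (t:ℂ)^(n-1) / ((n-1).factorial : ℂ)‖
          ≤ b * |t|^n / (n-1).factorial * Real.exp (b * |t|) := IH' t
      have hpw : ‖(t:ℂ)^(n-1) / ((n-1).factorial : ℂ)‖ = |t|^(n-1) / (n-1).factorial := by
        rw [norm_div, norm_pow, Complex.norm_real, Real.norm_eq_abs,
          Complex.norm_natCast]
      calc ‖A1 * (cf l n t - (t:ℂ)^(n-1) / ((n-1).factorial : ℂ))
            + (A1 - 1) * ((t:ℂ)^(n-1) / ((n-1).factorial : ℂ))‖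
          ≤ ‖A1‖ * ‖cf l n t - (t:ℂ)^(n-1) / ((n-1).factorial : ℂ)‖
            + ‖A1 - 1‖ * ‖(t:ℂ)^(n-1) / ((n-1).factorial : ℂ)‖ := by
            refine (norm_add_le _ _).trans ?_
            rw [norm_mul, norm_mul]
        _ ≤ Real.exp (b * |x - t|) * (b * |t|^n / (n-1).factorial * Real.exp (b * |t|))
            + (b * |x - t| * Real.exp (b * |x - t|)) * (|t|^(n-1) / (n-1).factorial) := by
            rw [hpw]
            exact add_le_add (mul_le_mul hA1 hg (norm_nonneg _) (Real.exp_nonneg _))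
              (mul_le_mul_of_nonneg_right hA1m (by positivity))
        _ ≤ K * |t|^(n-1) := by
            have hE : Real.exp (b * |x - t|) * Real.exp (b * |t|) = Real.exp (b * |x|) := by
              rw [← Real.exp_add, ← habs]
              ring_nf
            have hE2 : Real.exp (b * |x - t|) ≤ Real.exp (b * |x|) := by
              rw [Real.exp_le_exp]
              nlinarith
            have htn : |t|^n = |t| * |t|^(n-1) := by
              rw [← pow_succ']
              congr 1
              omega
            rw [hK]
            have hfpos : (0:ℝ) < (n-1).factorial := by positivity
            rw [htn]
            have e1 : Real.exp (b * |x - t|) * (b * (|t| * |t|^(n-1)) / (n-1).factorial * Real.exp (b * |t|))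
                = b * Real.exp (b * |x|) / (n-1).factorial * (|t| * |t|^(n-1)) := by
              field_simp
              linear_combination (b * (|t| * |t|^(n-1))) * hE
            rw [e1]
            have e2 : b * |x - t| * Real.exp (b * |x - t|) * (|t|^(n-1) / (n-1).factorial)
                ≤ b * Real.exp (b * |x|) / (n-1).factorial * (|x - t| * |t|^(n-1)) := by
              have h5 := mul_le_mul_of_nonneg_left hE2
                (mul_nonneg (mul_nonneg hb0 hs) (pow_nonneg hr (n-1)))
              calc b * |x - t| * Real.exp (b * |x - t|) * (|t|^(n-1) / (n-1).factorial)
                  = (b * |x - t| * |t|^(n-1)) * Real.exp (b * |x - t|) / (n-1).factorial := by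
                    ring
                _ ≤ (b * |x - t| * |t|^(n-1)) * Real.exp (b * |x|) / (n-1).factorial := by
                    gcongr
                _ = b * Real.exp (b * |x|) / (n-1).factorial * (|x - t| * |t|^(n-1)) := by
                    ring
            calc b * Real.exp (b * |x|) / (n-1).factorial * (|t| * |t|^(n-1))
                  + b * |x - t| * Real.exp (b * |x - t|) * (|t|^(n-1) / (n-1).factorial)
                ≤ b * Real.exp (b * |x|) / (n-1).factorial * (|t| * |t|^(n-1))
                  + b * Real.exp (b * |x|) / (n-1).factorial * (|x - t| * |t|^(n-1)) := by
                  linarith [e2]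
              _ = b * Real.exp (b * |x|) / (n-1).factorial * |x| * |t|^(n-1) := by
                  rw [← habs]; ring
    have hbound : IntervalIntegrable (fun t : ℝ => K * |t|^(n-1)) MeasureTheory.volume 0 x :=
      (Continuous.intervalIntegrable (by continuity) _ _)
    have := intervalIntegral.norm_integral_le_abs_of_norm_le
      (f := fun t : ℝ => Complex.exp (l n * (x - t)) * cf l n t - (t:ℂ)^(n-1) / ((n-1).factorial : ℂ))
      (g := fun t : ℝ => K * |t|^(n-1)) (μ := MeasureTheory.volume) (a := 0) (b := x)
      (MeasureTheory.ae_restrict_of_forall_mem measurableSet_uIoc hpt) hbound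
    refine this.trans ?_
    rw [intervalIntegral.integral_const_mul, integral_abs_pow]
    have hcast : ((n - 1 : ℕ) : ℝ) + 1 = n := by
      push_cast [Nat.cast_sub hn]
      ring
    rw [hcast]
    have hfac : (n.factorial : ℝ) = n * (n-1).factorial := by
      rw [← Nat.mul_factorial_pred (show n ≠ 0 by omega)]
      push_cast
      ring
    have e : |K * (x * |x|^(n-1) / (n:ℝ))| = K * (|x| * |x|^(n-1)) / n := by
      rw [abs_mul, abs_of_nonneg hK0, abs_div, abs_mul, abs_pow, abs_abs,
        Nat.abs_cast, mul_div_assoc]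
      ring
    rw [e]
    refine le_of_eq ?_
    have hxx : |x| * |x|^(n-1) = |x|^n := by
      rw [← pow_succ']
      congr 1
      omega
    have hxx2 : |x|^(n+1) = |x|^n * |x| := pow_succ _ _
    have hnne : (n:ℝ) ≠ 0 := by positivity
    have hfne : (((n-1).factorial : ℕ):ℝ) ≠ 0 := by positivity
    rw [hK, hfac, hxx, hxx2]
    field_simp

/-- With `ε = max(|λ₁|, …, |λₙ|)` satisfying `πε < 1/2`,
`a_q = 1 / ∏_{s ≠ q} (λ_q − λ_s)` and `f_n(x) = ∑_i a_i e^{λ_i x}`, one has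
`‖f_n(x) − x^{n-1}/(n-1)!‖_{L²([-π,π])} ≤ 2 C_n π ε` where
`C_n = √(2π/(2n+1)) · π^{n-1}/(n-1)!`. -/
theorem stmt10 (n : ℕ) (hn : 1 ≤ n) (l : Fin n → ℂ) (hl : Function.Injective l)
    (ε : ℝ) (hε : IsGreatest (Set.range fun i => ‖l i‖) ε)
    (hsmall : Real.pi * ε < 1 / 2)
    (a : Fin n → ℂ)
    (ha : ∀ q, a q = (∏ s ∈ Finset.univ.erase q, (l q - l s))⁻¹) :
    L2norm (fun x : ℝ => (∑ i, a i * Complex.exp (l i * x)) -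
        (x : ℂ) ^ (n - 1) / ((n - 1).factorial : ℂ))
      ≤ 2 * (Real.sqrt (2 * Real.pi / (2 * n + 1)) * Real.pi ^ (n - 1) /
          ((n - 1).factorial : ℝ)) * Real.pi * ε := by
  have hπ := Real.pi_pos
  -- ε basic facts
  obtain ⟨i0, hi0⟩ := hε.1
  have hε0 : 0 ≤ ε := hi0 ▸ norm_nonneg _
  -- setup nat-indexed version
  set l' : ℕ → ℂ := fun k => if h : k < n then l ⟨k, h⟩ else 0 with hl'
  have hl'eq : ∀ i : Fin n, l' i = l i := fun i => by
    simp only [hl', dif_pos i.isLt, Fin.eta]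
  have hinj' : Set.InjOn l' (Finset.range n) := by
    intro p hp q hq h
    simp only [Finset.coe_range, Set.mem_Iio] at hp hq
    rw [hl'] at h
    simp only [dif_pos hp, dif_pos hq] at h
    simpa using congrArg Fin.val (hl h)
  have hub : ∀ i < n, ‖l' i‖ ≤ ε := by
    intro i hi
    simp only [hl', dif_pos hi]
    exact hε.2 (Set.mem_range_self _)
  -- identification of the a's
  have haA : ∀ i : Fin n, a i = cA l' n i := by
    intro i
    rw [ha, cA]
    congr 1
    have himg : (Finset.range n).erase (i : ℕ)
        = Finset.image Fin.val (Finset.univ.erase i) := by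
      ext k
      simp only [Finset.mem_erase, Finset.mem_range, Finset.mem_image, Finset.mem_univ,
        and_true]
      constructor
      · rintro ⟨hne, hk⟩
        exact ⟨⟨k, hk⟩, by simp [Fin.ext_iff, hne], rfl⟩
      · rintro ⟨j, hj, rfl⟩
        exact ⟨fun h => hj (Fin.ext h), j.isLt⟩
    rw [himg, Finset.prod_image (fun p _ q _ h => Fin.ext h)]
    refine Finset.prod_congr rfl fun j _ => by rw [hl'eq, hl'eq]
  have hsum : ∀ x : ℝ, (∑ i, a i * Complex.exp (l i * x)) = cf l' n x := by
    intro x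
    rw [cf, ← Fin.sum_univ_eq_sum_range (fun k => cA l' n k * Complex.exp (l' k * x)) n]
    exact Finset.sum_congr rfl fun i _ => by rw [haA, hl'eq]
  -- the function and its pointwise bound
  set F : ℝ → ℂ := fun x : ℝ => (∑ i, a i * Complex.exp (l i * x)) -
      (x : ℂ) ^ (n - 1) / ((n - 1).factorial : ℂ) with hF
  set M : ℝ := ε * Real.exp (1/2) / (n-1).factorial with hM
  have hM0 : 0 ≤ M := by positivity
  have hpt : ∀ x ∈ Set.Icc (-Real.pi) Real.pi, ‖F x‖^2 ≤ (M * |x|^n)^2 := by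
    intro x hx
    have hxabs : |x| ≤ Real.pi := abs_le.mpr ⟨hx.1, hx.2⟩
    have h1 : ‖F x‖ ≤ ε * |x|^n / (n-1).factorial * Real.exp (ε * |x|) := by
      rw [hF]
      simp only
      rw [hsum]
      exact keybound n hn l' hinj' ε hub x
    have h2 : Real.exp (ε * |x|) ≤ Real.exp (1/2) := by
      rw [Real.exp_le_exp]
      nlinarith
    have h3 : ‖F x‖ ≤ M * |x|^n := by
      refine h1.trans ?_
      rw [hM]
      have : ε * |x|^n / (n-1).factorial * Real.exp (ε * |x|)
          ≤ ε * |x|^n / (n-1).factorial * Real.exp (1/2) := by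
        apply mul_le_mul_of_nonneg_left h2 (by positivity)
      refine this.trans (le_of_eq ?_)
      ring
    exact pow_le_pow_left₀ (norm_nonneg _) h3 2
  -- continuity
  have hFc : Continuous F := by
    have : Continuous fun x : ℝ => cf l' n x - (x : ℂ) ^ (n - 1) / ((n - 1).factorial : ℂ) :=
      (cf_continuous l' n).sub ((Complex.continuous_ofReal.pow _).div_const _)
    have e : F = fun x : ℝ => cf l' n x - (x : ℂ) ^ (n - 1) / ((n - 1).factorial : ℂ) := by
      funext x
      rw [hF]
      simp only
      rw [hsum]
    rw [e]
    exact this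
  -- integral comparison
  have hint1 : IntegrableOn (fun x => ‖F x‖^2) (Set.Icc (-Real.pi) Real.pi) volume :=
    ((hFc.norm.pow 2)).integrableOn_Icc
  have hint2 : IntegrableOn (fun x => (M * |x|^n)^2) (Set.Icc (-Real.pi) Real.pi) volume :=
    (Continuous.integrableOn_Icc (by fun_prop))
  have hmono : (∫ x in Set.Icc (-Real.pi) Real.pi, ‖F x‖^2)
      ≤ ∫ x in Set.Icc (-Real.pi) Real.pi, (M * |x|^n)^2 :=
    setIntegral_mono_on hint1 hint2 measurableSet_Icc hpt
  -- compute the RHS integral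
  have hsq : ∀ x : ℝ, (M * |x|^n)^2 = M^2 * x^(2*n) := by
    intro x
    rw [mul_pow, ← abs_pow, sq_abs, ← pow_mul, mul_comm n 2]
  have hval : (∫ x in Set.Icc (-Real.pi) Real.pi, (M * |x|^n)^2)
      = M^2 * (2 * Real.pi^(2*n+1) / (2*n+1)) := by
    simp_rw [hsq]
    rw [MeasureTheory.integral_Icc_eq_integral_Ioc,
      ← intervalIntegral.integral_of_le (by linarith : -Real.pi ≤ Real.pi),
      intervalIntegral.integral_const_mul, integral_pow]
    have hodd : Odd (2*n+1) := ⟨n, by ring⟩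
    rw [hodd.neg_pow]
    push_cast
    ring
  -- conclude
  have hL2 : L2norm F ≤ Real.sqrt (M^2 * (2 * Real.pi^(2*n+1) / (2*n+1))) := by
    rw [L2norm]
    exact Real.sqrt_le_sqrt (hmono.trans_eq hval)
  refine hL2.trans ?_
  have hfactor : M^2 * (2 * Real.pi^(2*n+1) / (2*n+1))
      = (M * Real.pi^n)^2 * (2 * Real.pi / (2*n+1)) := by
    have : Real.pi^(2*n+1) = (Real.pi^n)^2 * Real.pi := by
      rw [← pow_mul, ← pow_succ]
      congr 1
      omega
    rw [this]
    ring
  rw [hfactor, Real.sqrt_mul (by positivity), Real.sqrt_sq (by positivity)]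
  -- final numeric step
  have hexp2 : Real.exp (1/2) ≤ 2 := by
    have h1 : Real.exp (1/2) * Real.exp (1/2) = Real.exp 1 := by
      rw [← Real.exp_add]; norm_num
    nlinarith [Real.exp_pos (1/2), Real.exp_one_lt_d9]
  have hπn : Real.pi^(n-1) * Real.pi = Real.pi^n := by
    rw [← pow_succ]
    congr 1
    omega
  have hfpos : (0:ℝ) < (n-1).factorial := by positivity
  calc M * Real.pi^n * Real.sqrt (2 * Real.pi / (2*n+1))
      ≤ (2 * ε / (n-1).factorial) * Real.pi^n * Real.sqrt (2 * Real.pi / (2*n+1)) := by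
        have h6 : ε * Real.exp (1/2) ≤ 2 * ε := by nlinarith
        have h7 : M ≤ 2 * ε / (n-1).factorial := by
          rw [hM]
          gcongr
        have := mul_le_mul_of_nonneg_right
          (mul_le_mul_of_nonneg_right h7 (by positivity : (0:ℝ) ≤ Real.pi^n))
          (Real.sqrt_nonneg (2 * Real.pi / (2*n+1)))
        exact this
    _ = 2 * (Real.sqrt (2 * Real.pi / (2 * n + 1)) * Real.pi ^ (n - 1) /
          ((n - 1).factorial : ℝ)) * Real.pi * ε := by
        rw [← hπn]
        push_cast
        ring
end

section
/- (Theorem 3.2) Fix an integer n ≥ 1. For every δ > 0 there exists ε₀ > 0 such that: whenever λ₁, …, λₙ are mutually distinct complex numbers with |λᵢ| < ε₀ for all i, there exist functions f₁, …, fₙ, each belonging to the span of e^{λ₁ x}, …, e^{λₙ x} in L²([−π, π]), such that ‖f_s(x) − x^{s−1}‖_{L²([−π,π])} < δ for every s = 1, …, n. -/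
open MeasureTheory
open scoped Nat Real

namespace Stmt12Aux

/-- complete homogeneous symmetric "polynomial": `H l d a m = h_d (l a, …, l (a+m))`. -/
noncomputable def H (l : ℕ → ℂ) : ℕ → ℕ → ℕ → ℂ
  | 0, _, _ => 1
  | d+1, a, 0 => l a * H l d a 0
  | d+1, a, m+1 => H l (d+1) a m + l (a+m+1) * H l d a (m+1)
  termination_by d _ m => (d, m)

/-- divided differences of `x ↦ exp (l i * x)` over nodes `l a, …, l (a+m)`. -/
noncomputable def DD (l : ℕ → ℂ) : ℕ → ℕ → ℝ → ℂ
  | a, 0, x => Complex.exp (l a * x)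
  | a, m+1, x => (DD l (a+1) m x - DD l a m x) / (l (a+m+1) - l a)

lemma H_zero (l : ℕ → ℂ) (a m : ℕ) : H l 0 a m = 1 := by rw [H]

lemma H_pow (l : ℕ → ℂ) (d a : ℕ) : H l d a 0 = (l a) ^ d := by
  induction d with
  | zero => rw [H]; simp
  | succ d ih => rw [H, ih]; ring

lemma H_succ (l : ℕ → ℂ) (d a m : ℕ) :
    H l (d+1) a (m+1) = H l (d+1) a m + l (a+m+1) * H l d a (m+1) := by rw [H]

lemma H_geom (l : ℕ → ℂ) (d a : ℕ) :
    (l (a+1) - l a) * H l d a 1 = l (a+1) ^ (d+1) - l a ^ (d+1) := by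
  induction d with
  | zero => rw [H_zero]; ring
  | succ d ih =>
    have h1 := H_succ l d a 0
    simp only [show (0:ℕ)+1 = 1 from rfl, Nat.add_zero] at h1
    have h2 := H_pow l (d+1) a
    linear_combination l (a+1) * ih + (l (a+1) - l a) * h1 + (l (a+1) - l a) * h2

lemma H_prepend (l : ℕ → ℂ) : ∀ N d m a, d + m = N →
    H l (d+1) a (m+1) = H l (d+1) (a+1) m + l a * H l d a (m+1) := by
  intro N
  induction N using Nat.strong_induction_on with
  | _ N ih =>
    intro d m a hN
    match m with
    | 0 =>
      have e1 := H_succ l d a 0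
      simp only [show (0:ℕ)+1 = 1 from rfl, Nat.add_zero] at e1
      have h1 := H_pow l (d+1) a
      have h2 := H_pow l (d+1) (a+1)
      have hg := H_geom l d a
      linear_combination e1 + h1 - h2 + hg
    | m+1 =>
      have ih1 : H l (d+1) a (m+1) = H l (d+1) (a+1) m + l a * H l d a (m+1) :=
        ih (d+m) (by omega) d m a rfl
      have e1 := H_succ l d a (m+1)
      have e2 := H_succ l d (a+1) m
      simp only [show a+(m+1)+1 = a+m+2 from by omega, show a+1+m+1 = a+m+2 from by omega,
        show m+1+1 = m+2 from rfl] at *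
      match d with
      | 0 =>
        simp only [H_zero] at *
        linear_combination e1 + ih1 - e2
      | e+1 =>
        have ih2 : H l (e+1) a (m+2) = H l (e+1) (a+1) (m+1) + l a * H l e a (m+2) :=
          ih (e+m+1) (by omega) e (m+1) a rfl
        have e3 := H_succ l e a (m+1)
        simp only [show a+(m+1)+1 = a+m+2 from by omega, show m+1+1 = m+2 from rfl] at e3 ih2
        linear_combination e1 + ih1 + l (a+m+2) * ih2 - e2 - l a * e3

/-- key identity. -/
lemma H_key (l : ℕ → ℂ) (d a m : ℕ) :
    H l (d+1) (a+1) m - H l (d+1) a m = (l (a+m+1) - l a) * H l d a (m+1) := by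
  have h1 := H_succ l d a m
  have h2 := H_prepend l (d+m) d m a rfl
  linear_combination h1 - h2

lemma H_bound (l : ℕ → ℂ) (ε : ℝ) (hε : 0 ≤ ε) (hl : ∀ i, ‖l i‖ ≤ ε) :
    ∀ d m a, ‖H l d a m‖ ≤ (d + m).choose m * ε ^ d := by
  intro d
  induction d with
  | zero => intro m a; rw [H_zero]; simp
  | succ d ihd =>
    intro m
    induction m with
    | zero =>
      intro a
      rw [H_pow, norm_pow]
      simpa using pow_le_pow_left₀ (norm_nonneg _) (hl a) (d+1)
    | succ m ihm =>
      intro a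
      have t1 := ihm a
      have t2 := ihd (m+1) a
      have t3 := hl (a+m+1)
      have hp : ((d+1)+(m+1)).choose (m+1) = (d+1+m).choose m + (d+m+1).choose (m+1) := by
        rw [show (d+1)+(m+1) = (d+m+1)+1 by omega, Nat.choose_succ_succ,
          show d+m+1 = d+1+m by omega]
      rw [H_succ]
      calc ‖H l (d+1) a m + l (a+m+1) * H l d a (m+1)‖
          ≤ ‖H l (d+1) a m‖ + ‖l (a+m+1) * H l d a (m+1)‖ :=
            norm_add_le _ _
        _ = ‖H l (d+1) a m‖ + ‖l (a+m+1)‖ * ‖H l d a (m+1)‖ := by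
            rw [norm_mul]
        _ ≤ ((d+1+m).choose m : ℝ) * ε ^ (d+1) + ε * (((d+(m+1)).choose (m+1) : ℝ) * ε ^ d) := by
            have hH : (0:ℝ) ≤ ‖H l d a (m+1)‖ := norm_nonneg _
            have := mul_le_mul t3 t2 hH hε
            nlinarith [this, t1]
        _ = (((d+1+m).choose m + (d+m+1).choose (m+1) : ℕ) : ℝ) * ε ^ (d+1) := by
            rw [show d+(m+1) = d+m+1 from by omega]; push_cast; ring
        _ = (((d+1)+(m+1)).choose (m+1) : ℝ) * ε ^ (d+1) := by rw [hp]

noncomputable def E (l : ℕ → ℂ) (a m : ℕ) (x : ℝ) : ℂ :=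
  ∑' d : ℕ, (x:ℂ)^(d+m) / ((d+m)! : ℂ) * H l d a m

lemma term_abs (l : ℕ → ℂ) (a m d : ℕ) (x : ℝ) :
    ‖(x:ℂ)^(d+m) / ((d+m)! : ℂ) * H l d a m‖
      = |x|^(d+m) / ((d+m)! : ℝ) * ‖H l d a m‖ := by
  simp [norm_mul, norm_div, norm_pow, Complex.norm_real, Real.norm_eq_abs,
    Complex.norm_natCast, abs_of_nonneg]

lemma choose_fact (d m : ℕ) : (((d+m).choose m : ℝ)) * (m ! * d !) = ((d+m)! : ℝ) := by
  have := Nat.choose_mul_factorial_mul_factorial (Nat.le_add_left m d)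
  have h2 : d + m - m = d := by omega
  rw [h2] at this
  push_cast [← this]
  ring

lemma term_bound (l : ℕ → ℂ) (ε : ℝ) (hε : 0 ≤ ε)
    (hb : ∀ d m a, ‖H l d a m‖ ≤ (d + m).choose m * ε ^ d)
    (a m d : ℕ) (x : ℝ) :
    ‖(x:ℂ)^(d+m) / ((d+m)! : ℂ) * H l d a m‖
      ≤ |x|^m / (m ! : ℝ) * ((|x| * ε)^d / (d ! : ℝ)) := by
  rw [term_abs]
  have h1 : |x|^(d+m) / ((d+m)! : ℝ) * (((d+m).choose m : ℝ) * ε ^ d)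
      = |x|^m / (m ! : ℝ) * ((|x| * ε)^d / (d ! : ℝ)) := by
    have hcf := choose_fact d m
    have hf : ((d+m)! : ℝ) ≠ 0 := by positivity
    have hm : (m ! : ℝ) ≠ 0 := by positivity
    have hd : (d ! : ℝ) ≠ 0 := by positivity
    field_simp
    rw [pow_add, mul_pow]
    linear_combination |x| ^ d * |x| ^ m * ε ^ d * hcf
  rw [← h1]
  have := hb d m a
  have h0 : (0:ℝ) ≤ |x|^(d+m) / ((d+m)! : ℝ) := by positivity
  exact mul_le_mul_of_nonneg_left this h0

lemma summable_term (l : ℕ → ℂ) (ε : ℝ) (hε : 0 ≤ ε)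
    (hb : ∀ d m a, ‖H l d a m‖ ≤ (d + m).choose m * ε ^ d)
    (a m : ℕ) (x : ℝ) :
    Summable (fun d : ℕ => (x:ℂ)^(d+m) / ((d+m)! : ℂ) * H l d a m) := by
  apply Summable.of_norm_bounded (g := fun d => |x|^m / (m ! : ℝ) * ((|x| * ε)^d / (d ! : ℝ)))
  · exact (Real.summable_pow_div_factorial _).mul_left _
  · exact fun d => term_bound l ε hε hb a m d x


lemma exp_tsum (z : ℂ) : Complex.exp z = ∑' d : ℕ, z^d / (d ! : ℂ) := by
  rw [Complex.exp_eq_exp_ℂ, NormedSpace.exp_eq_tsum_div]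

lemma E_base (l : ℕ → ℂ) (a : ℕ) (x : ℝ) : E l a 0 x = Complex.exp (l a * x) := by
  rw [exp_tsum, E]
  apply tsum_congr
  intro d
  have hp : H l d a 0 = (l a)^d := by
    induction d with
    | zero => rw [H]; rfl
    | succ d ih => rw [H, ih]; ring
  rw [hp, mul_pow]
  ring

lemma E_step (l : ℕ → ℂ) (ε : ℝ) (hε : 0 ≤ ε)
    (hb : ∀ d m a, ‖H l d a m‖ ≤ (d + m).choose m * ε ^ d)
    (a m : ℕ) (x : ℝ) :
    E l (a+1) m x - E l a m x = (l (a+m+1) - l a) * E l a (m+1) x := by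
  have s1 := summable_term l ε hε hb (a+1) m x
  have s2 := summable_term l ε hε hb a m x
  rw [E, E, E, ← Summable.tsum_sub s1 s2, ← tsum_mul_left]
  set F := fun d : ℕ => (x:ℂ)^(d+m)/((d+m)! :ℂ) * H l d (a+1) m
      - (x:ℂ)^(d+m)/((d+m)! :ℂ) * H l d a m with hFdef
  have hF : Summable F := s1.sub s2
  have h0 : F 0 = 0 := by simp [hFdef, H_zero]
  rw [hF.tsum_eq_zero_add, h0, zero_add]
  apply tsum_congr
  intro d
  have key := H_key l d a m
  have hidx : d+1+m = d+(m+1) := by omega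
  calc F (d+1) = (x:ℂ)^(d+1+m)/((d+1+m)! : ℂ)
        * (H l (d+1) (a+1) m - H l (d+1) a m) := by rw [hFdef]; ring
    _ = (x:ℂ)^(d+1+m)/((d+1+m)! : ℂ) * ((l (a+m+1) - l a) * H l d a (m+1)) := by rw [key]
    _ = (l (a+m+1) - l a) * ((x:ℂ)^(d+(m+1))/((d+(m+1))! : ℂ) * H l d a (m+1)) := by
        rw [hidx]; ring

lemma DD_eq_E (l : ℕ → ℂ) (ε : ℝ) (hε : 0 ≤ ε)
    (hb : ∀ d m a, ‖H l d a m‖ ≤ (d + m).choose m * ε ^ d) (x : ℝ) :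
    ∀ m a, (∀ i j, a ≤ i → i < j → j ≤ a+m → l i ≠ l j) → DD l a m x = E l a m x := by
  intro m
  induction m with
  | zero => intro a _; rw [DD, E_base]
  | succ m ih =>
    intro a hd
    have hne : l (a+m+1) - l a ≠ 0 := by
      refine sub_ne_zero.mpr ?_
      exact fun h => hd a (a+m+1) le_rfl (by omega) (by omega) h.symm
    have h1 : DD l a (m+1) x = (DD l (a+1) m x - DD l a m x) / (l (a+m+1) - l a) := by
      rw [DD]
    rw [h1, ih (a+1) (fun i j hi hij hj => hd i j (by omega) hij (by omega)),
      ih a (fun i j hi hij hj => hd i j hi hij (by omega)),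
      E_step l ε hε hb a m x, mul_div_cancel_left₀ _ hne]

lemma DD_cont (l : ℕ → ℂ) : ∀ m a, Continuous (fun x => DD l a m x) := by
  intro m
  induction m with
  | zero =>
    intro a
    have : (fun x : ℝ => DD l a 0 x) = fun x : ℝ => Complex.exp (l a * x) := by
      funext x; rw [DD]
    rw [this]
    exact Complex.continuous_exp.comp (continuous_const.mul Complex.continuous_ofReal)
  | succ m ih =>
    intro a
    have : (fun x : ℝ => DD l a (m+1) x)
        = fun x : ℝ => (DD l (a+1) m x - DD l a m x) / (l (a+m+1) - l a) := by
      funext x; rw [DD]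
    rw [this]
    exact ((ih (a+1)).sub (ih a)).div_const _

lemma real_exp_tsum (r : ℝ) : ∑' d : ℕ, r^d / (d ! : ℝ) = Real.exp r := by
  rw [Real.exp_eq_exp_ℝ, NormedSpace.exp_eq_tsum_div]

lemma E_close (l : ℕ → ℂ) (ε : ℝ) (hε : 0 ≤ ε) (hε1 : ε ≤ 1)
    (hb : ∀ d m a, ‖H l d a m‖ ≤ (d + m).choose m * ε ^ d)
    (a m : ℕ) (x : ℝ) (hx : |x| ≤ π) :
    ‖E l a m x - (x:ℂ)^m / (m ! : ℂ)‖ ≤ π^m / (m ! : ℝ) * (π * ε * Real.exp π) := by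
  have hs := summable_term l ε hε hb a m x
  have h0 : (x:ℂ)^(0+m) / ((0+m)! : ℂ) * H l 0 a m = (x:ℂ)^m / (m ! : ℂ) := by
    rw [H_zero, Nat.zero_add, mul_one]
  have hE : E l a m x - (x:ℂ)^m / (m ! : ℂ)
      = ∑' d : ℕ, (x:ℂ)^((d+1)+m) / (((d+1)+m)! : ℂ) * H l (d+1) a m := by
    rw [E, hs.tsum_eq_zero_add, h0, add_sub_cancel_left]
  rw [hE]
  have hπ : (0:ℝ) ≤ π := Real.pi_pos.le
  have bd : ∀ d : ℕ, ‖(x:ℂ)^((d+1)+m) / (((d+1)+m)! : ℂ) * H l (d+1) a m‖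
      ≤ π^m / (m ! : ℝ) * (π * ε) * ((π*ε)^d / (d ! : ℝ)) := by
    intro d
    refine (term_bound l ε hε hb a m (d+1) x).trans ?_
    have h1 : (|x| * ε)^(d+1) / ((d+1)! : ℝ) ≤ (π*ε)^(d+1) / (d ! : ℝ) := by
      have hxε : (|x| * ε)^(d+1) ≤ (π*ε)^(d+1) :=
        pow_le_pow_left₀ (by positivity) (by nlinarith [abs_nonneg x]) _
      have hfa : (d ! : ℝ) ≤ ((d+1)! : ℝ) := by
        exact_mod_cast Nat.factorial_le (Nat.le_succ d)
      have hd0 : (0:ℝ) < (d ! : ℝ) := by positivity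
      have hd1 : (0:ℝ) < ((d+1)! : ℝ) := by positivity
      calc (|x| * ε)^(d+1) / ((d+1)! : ℝ) ≤ (π*ε)^(d+1) / ((d+1)! : ℝ) := by
            gcongr
        _ ≤ (π*ε)^(d+1) / (d ! : ℝ) := by
            gcongr
    have h2 : |x|^m / (m ! : ℝ) ≤ π^m / (m ! : ℝ) := by
      have := pow_le_pow_left₀ (abs_nonneg x) hx m
      have hm0 : (0:ℝ) < (m ! : ℝ) := by positivity
      gcongr
    calc |x|^m / (m ! : ℝ) * ((|x| * ε)^(d+1) / ((d+1)! : ℝ))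
        ≤ π^m / (m ! : ℝ) * ((π*ε)^(d+1) / (d ! : ℝ)) := by
          apply mul_le_mul h2 h1 (by positivity) (by positivity)
      _ = π^m / (m ! : ℝ) * (π * ε) * ((π*ε)^d / (d ! : ℝ)) := by
          rw [pow_succ]; ring
  have hsb : Summable (fun d : ℕ => π^m / (m ! : ℝ) * (π * ε) * ((π*ε)^d / (d ! : ℝ))) :=
    (Real.summable_pow_div_factorial _).mul_left _
  calc ‖∑' d : ℕ, (x:ℂ)^((d+1)+m) / (((d+1)+m)! : ℂ) * H l (d+1) a m‖
      ≤ ∑' d : ℕ, π^m / (m ! : ℝ) * (π * ε) * ((π*ε)^d / (d ! : ℝ)) :=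
        tsum_of_norm_bounded hsb.hasSum bd
    _ = π^m / (m ! : ℝ) * (π * ε) * Real.exp (π*ε) := by
        rw [tsum_mul_left, real_exp_tsum]
    _ ≤ π^m / (m ! : ℝ) * (π * ε) * Real.exp π := by
        have h3 : Real.exp (π*ε) ≤ Real.exp π := Real.exp_le_exp.mpr (by nlinarith)
        have h4 : (0:ℝ) ≤ π^m / (m ! : ℝ) * (π * ε) := by positivity
        exact mul_le_mul_of_nonneg_left h3 h4
    _ = π^m / (m ! : ℝ) * (π * ε * Real.exp π) := by ring

lemma DD_mem (n : ℕ) (l : Fin n → ℂ) (l' : ℕ → ℂ) (hl' : ∀ i (h : i < n), l' i = l ⟨i, h⟩) :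
    ∀ m a, a + m < n → (fun x => DD l' a m x) ∈ Submodule.span ℂ
      (Set.range fun i : Fin n => fun x : ℝ => Complex.exp (l i * x)) := by
  intro m
  induction m with
  | zero =>
    intro a ha
    have he : (fun x : ℝ => DD l' a 0 x)
        = (fun i : Fin n => fun x : ℝ => Complex.exp (l i * x)) ⟨a, by omega⟩ := by
      funext x; rw [DD, hl' a (by omega)]
    rw [he]
    exact Submodule.subset_span ⟨_, rfl⟩
  | succ m ih =>
    intro a ha
    have he : (fun x : ℝ => DD l' a (m+1) x)
        = (l' (a+m+1) - l' a)⁻¹ • ((fun x => DD l' (a+1) m x) - fun x => DD l' a m x) := by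
      funext x
      rw [DD]
      simp only [Pi.smul_apply, Pi.sub_apply, smul_eq_mul]
      rw [div_eq_inv_mul]
    rw [he]
    exact Submodule.smul_mem _ _
      (Submodule.sub_mem _ (ih (a+1) (by omega)) (ih a (by omega)))

lemma L2norm_le (g : ℝ → ℂ) (B : ℝ) (hB : 0 ≤ B) (hg : Continuous g)
    (hbd : ∀ x ∈ Set.Icc (-π) π, ‖g x‖ ≤ B) :
    L2norm g ≤ B * Real.sqrt (2*π) := by
  have hπ := Real.pi_pos
  have hvol : (MeasureTheory.volume (Set.Icc (-π) π)).toReal = 2*π := by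
    rw [Real.volume_Icc, ENNReal.toReal_ofReal (by linarith)]
    ring
  have hint : ‖∫ x in Set.Icc (-π) π, ‖g x‖^2‖ ≤ B^2 * (2*π) := by
    rw [← hvol]
    apply MeasureTheory.norm_setIntegral_le_of_norm_le_const
    · rw [Real.volume_Icc]; exact ENNReal.ofReal_lt_top
    · intro x hx
      have := hbd x hx
      have h0 : (0:ℝ) ≤ ‖g x‖ := norm_nonneg _
      rw [Real.norm_eq_abs, abs_of_nonneg (by positivity)]
      exact pow_le_pow_left₀ h0 this 2
  have h1 : (∫ x in Set.Icc (-π) π, ‖g x‖^2) ≤ B^2 * (2*π) :=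
    (le_abs_self _).trans (by rwa [← Real.norm_eq_abs])
  calc L2norm g ≤ Real.sqrt (B^2 * (2*π)) := Real.sqrt_le_sqrt h1
    _ = B * Real.sqrt (2*π) := by
        rw [Real.sqrt_mul (by positivity), Real.sqrt_sq hB]

end Stmt12Aux

open Stmt12Aux in
/-- Theorem 3.2: for every `δ > 0` there is `ε₀ > 0` such that whenever
`λ₁, …, λₙ` are mutually distinct complex numbers with `|λᵢ| < ε₀`, there are
functions `f₁, …, fₙ` in the span of `e^{λ₁ x}, …, e^{λₙ x}` with
`‖f_s(x) − x^{s-1}‖_{L²([-π,π])} < δ` for all `s = 1, …, n`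
(indices shifted so `s : Fin n` corresponds to the monomial `x^s`). -/
theorem stmt12 (n : ℕ) (hn : 1 ≤ n) :
    ∀ δ > (0 : ℝ), ∃ ε₀ > (0 : ℝ), ∀ l : Fin n → ℂ, Function.Injective l →
      (∀ i, ‖l i‖ < ε₀) →
      ∃ f : Fin n → (ℝ → ℂ),
        (∀ s, f s ∈ Submodule.span ℂ
          (Set.range fun i : Fin n => fun x : ℝ => Complex.exp (l i * x))) ∧
        ∀ s : Fin n, L2norm (fun x : ℝ => f s x - (x : ℂ) ^ (s : ℕ)) < δ := by
  intro δ hδ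
  have hπ := Real.pi_pos
  have hπ1 : (1:ℝ) ≤ π := by nlinarith [Real.pi_gt_three]
  set C : ℝ := Real.sqrt (2*π) * π^n * π * Real.exp π with hC
  have hCpos : 0 < C := by positivity
  set ε₀ : ℝ := min 1 (δ/(2*C)) with hε₀
  have hε₀pos : 0 < ε₀ := lt_min one_pos (by positivity)
  have hε₀1 : ε₀ ≤ 1 := min_le_left _ _
  have hε₀C : ε₀ ≤ δ/(2*C) := min_le_right _ _
  refine ⟨ε₀, hε₀pos, ?_⟩
  intro l hinj hlt
  set l' : ℕ → ℂ := fun i => if h : i < n then l ⟨i, h⟩ else 0 with hl'def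
  have hl'eq : ∀ i (h : i < n), l' i = l ⟨i, h⟩ := fun i h => dif_pos h
  have hl'le : ∀ i, ‖l' i‖ ≤ ε₀ := by
    intro i
    by_cases h : i < n
    · rw [hl'eq i h]; exact (hlt _).le
    · simp [hl'def, h, hε₀pos.le]
  have hb := H_bound l' ε₀ hε₀pos.le hl'le
  refine ⟨fun s : Fin n => fun x : ℝ => (((s:ℕ)! : ℂ)) * DD l' 0 (s:ℕ) x, ?_, ?_⟩
  · intro s
    have := DD_mem n l l' hl'eq (s:ℕ) 0 (by omega)
    exact Submodule.smul_mem _ (((s:ℕ)! : ℂ)) this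
  · intro s
    set B : ℝ := π^n * π * ε₀ * Real.exp π with hB
    have hBpos : 0 < B := by positivity
    have hdist : ∀ i j, 0 ≤ i → i < j → j ≤ 0 + (s:ℕ) → l' i ≠ l' j := by
      intro i j _ hij hj
      have hi' : i < n := by omega
      have hj' : j < n := by omega
      rw [hl'eq i hi', hl'eq j hj']
      intro hEq
      have := hinj hEq
      have : i = j := by simpa [Fin.ext_iff] using this
      omega
    have hbd : ∀ x ∈ Set.Icc (-π) π,
        ‖((s:ℕ)! : ℂ) * DD l' 0 (s:ℕ) x - (x:ℂ)^(s:ℕ)‖ ≤ B := by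
      intro x hx
      have hxπ : |x| ≤ π := abs_le.mpr ⟨hx.1, hx.2⟩
      have hDE := DD_eq_E l' ε₀ hε₀pos.le hb x (s:ℕ) 0 hdist
      have hEc := E_close l' ε₀ hε₀pos.le hε₀1 hb 0 (s:ℕ) x hxπ
      have hsf : ((s:ℕ)! : ℂ) ≠ 0 := by
        exact_mod_cast Nat.factorial_ne_zero (s:ℕ)
      have heq : ((s:ℕ)! : ℂ) * DD l' 0 (s:ℕ) x - (x:ℂ)^(s:ℕ)
          = ((s:ℕ)! : ℂ) * (E l' 0 (s:ℕ) x - (x:ℂ)^(s:ℕ) / (((s:ℕ)!) : ℂ)) := by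
        rw [hDE]; field_simp
      rw [heq, norm_mul]
      have hnf : ‖(((s:ℕ)!) : ℂ)‖ = ((s:ℕ)! : ℝ) := by
        simp [Complex.norm_natCast]
      rw [hnf]
      calc ((s:ℕ)! : ℝ) * ‖E l' 0 (s:ℕ) x - (x:ℂ)^(s:ℕ) / (((s:ℕ)!) : ℂ)‖
          ≤ ((s:ℕ)! : ℝ) * (π^(s:ℕ) / ((s:ℕ)! : ℝ) * (π * ε₀ * Real.exp π)) := by
            have h0 : (0:ℝ) ≤ ((s:ℕ)! : ℝ) := by positivity
            exact mul_le_mul_of_nonneg_left hEc h0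
        _ = π^(s:ℕ) * (π * ε₀ * Real.exp π) := by
            have h0 : ((s:ℕ)! : ℝ) ≠ 0 := by positivity
            field_simp
        _ ≤ π^n * (π * ε₀ * Real.exp π) := by
            have hsn : (s:ℕ) ≤ n := (s.isLt).le
            have h1 := pow_le_pow_right₀ hπ1 hsn
            exact mul_le_mul_of_nonneg_right h1 (by positivity)
        _ = B := by rw [hB]; ring
    have hcont : Continuous (fun x : ℝ => ((s:ℕ)! : ℂ) * DD l' 0 (s:ℕ) x - (x:ℂ)^(s:ℕ)) :=
      (continuous_const.mul (DD_cont l' (s:ℕ) 0)).sub (Complex.continuous_ofReal.pow _)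
    have := L2norm_le _ B hBpos.le hcont hbd
    calc L2norm (fun x : ℝ => ((s:ℕ)! : ℂ) * DD l' 0 (s:ℕ) x - (x:ℂ)^(s:ℕ))
        ≤ B * Real.sqrt (2*π) := this
      _ = C * ε₀ := by rw [hB, hC]; ring
      _ ≤ C * (δ/(2*C)) := mul_le_mul_of_nonneg_left hε₀C hCpos.le
      _ = δ/2 := by field_simp
      _ < δ := by linarith
end

section
/- (Theorem 3.3) Fix an integer n ≥ 1. For every δ > 0 there exists ε₀ > 0 such that: whenever λ₁, …, λₙ are mutually distinct complex numbers with |λᵢ| < ε₀ for all i, there exist functions f₁, …, fₙ forming a basis of the n-dimensional subspace L = Span(e^{λ₁ x}, …, e^{λₙ x}) of L²([−π, π]) and satisfying ‖f_s(x) − x^{s−1}‖_{L²([−π,π])} < δ for every s = 1, …, n. Consequently, as all λᵢ → 0 the subspaces L converge, in the sense of convergence of subspaces of a Hilbert space, to the subspace M = Span(1, x, …, x^{n−1}). -/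
open MeasureTheory Finset

noncomputable def hp : ∀ m : ℕ, (Fin m → ℂ) → ℕ → ℂ
  | 0, _, 0 => 1
  | 0, _, (_+1) => 0
  | (m+1), μ, r => ∑ j ∈ Finset.range (r+1), μ 0 ^ j * hp m (Fin.tail μ) (r - j)

noncomputable def pc {m : ℕ} (μ : Fin m → ℂ) (i : Fin m) : ℂ :=
  ∏ j ∈ Finset.univ.erase i, (μ i - μ j)

noncomputable def dd {m : ℕ} (μ : Fin m → ℂ) (k : ℕ) : ℂ :=
  ∑ i, μ i ^ k * (pc μ i)⁻¹

lemma hp_zero : ∀ (m : ℕ) (μ : Fin m → ℂ), hp m μ 0 = 1 := by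
  intro m
  induction m with
  | zero => intro μ; rfl
  | succ m ih => intro μ; simp [hp, ih]

lemma prod_erase_univ {n : ℕ} (x : Fin (n+1)) (f : Fin (n+1) → ℂ) :
    ∏ j ∈ Finset.univ.erase x, f j = ∏ i : Fin n, f (x.succAbove i) := by
  rw [Fin.univ_succAbove n x, Finset.erase_cons, Finset.prod_map]
  rfl

lemma pc_cons_zero {m : ℕ} (a : ℂ) (ν : Fin m → ℂ) :
    pc (Fin.cons a ν) 0 = ∏ j, (a - ν j) := by
  rw [pc, prod_erase_univ]
  simp

lemma pc_cons_succ : ∀ {m : ℕ} (a : ℂ) (ν : Fin m → ℂ) (i : Fin m),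
    pc (Fin.cons a ν) i.succ = (ν i - a) * pc ν i
  | 0, _, _, i => i.elim0
  | (m+1), a, ν, i => by
    rw [pc, prod_erase_univ, Fin.prod_univ_succ]
    rw [pc, prod_erase_univ]
    simp [Fin.succ_succAbove_succ]

lemma pc_ne_zero {m : ℕ} {μ : Fin m → ℂ} (h : Function.Injective μ) (i : Fin m) :
    pc μ i ≠ 0 := by
  rw [pc, Finset.prod_ne_zero_iff]
  intro j hj
  exact sub_ne_zero.mpr fun hc => (Finset.mem_erase.mp hj).1 (h hc).symm

lemma dd_cons {m : ℕ} (a : ℂ) (ν : Fin m → ℂ) (k : ℕ) :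
    dd (Fin.cons a ν) k
      = a ^ k * (∏ j, (a - ν j))⁻¹ + ∑ i, ν i ^ k * ((ν i - a) * pc ν i)⁻¹ := by
  rw [dd, Fin.sum_univ_succ, Fin.cons_zero, pc_cons_zero]
  congr 1
  refine Finset.sum_congr rfl fun i _ => ?_
  rw [Fin.cons_succ]
  congr 2
  exact pc_cons_succ a ν i

lemma hp_bound (ε : ℝ) (hε : 0 ≤ ε) :
    ∀ (m : ℕ) (μ : Fin m → ℂ), (∀ i, ‖μ i‖ ≤ ε) → ∀ r,
      ‖hp m μ r‖ ≤ 2 ^ (r + m) * ε ^ r := by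
  intro m
  induction m with
  | zero =>
    intro μ _ r
    match r with
    | 0 => simp [hp]
    | (r+1) => simp [hp]; positivity
  | succ m ih =>
    intro μ hμ r
    have htail : ∀ i, ‖Fin.tail μ i‖ ≤ ε := fun i => hμ _
    calc ‖hp (m+1) μ r‖
        ≤ ∑ j ∈ Finset.range (r+1), ‖μ 0 ^ j * hp m (Fin.tail μ) (r - j)‖ := by
          rw [hp]; exact norm_sum_le _ _
      _ ≤ ∑ j ∈ Finset.range (r+1), ε ^ j * (2 ^ ((r-j) + m) * ε ^ (r-j)) := by
          refine Finset.sum_le_sum fun j _ => ?_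
          rw [norm_mul, norm_pow]
          exact mul_le_mul (pow_le_pow_left₀ (norm_nonneg _) (hμ 0) j)
            (ih _ htail _) (norm_nonneg _) (by positivity)
      _ = ∑ j ∈ Finset.range (r+1), 2 ^ ((r-j) + m) * ε ^ r := by
          refine Finset.sum_congr rfl fun j hj => ?_
          have hjr : j ≤ r := Nat.lt_succ_iff.mp (Finset.mem_range.mp hj)
          rw [← mul_assoc, mul_comm (ε^j), mul_assoc, ← pow_add,
            Nat.add_sub_cancel' hjr]
      _ ≤ 2 ^ (r + (m+1)) * ε ^ r := by
          rw [← Finset.sum_mul]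
          refine mul_le_mul_of_nonneg_right ?_ (by positivity)
          calc ∑ j ∈ Finset.range (r+1), (2:ℝ) ^ ((r-j) + m)
              = ∑ j ∈ Finset.range (r+1), 2 ^ (r-j) * 2 ^ m := by
                refine Finset.sum_congr rfl fun j _ => ?_; rw [pow_add]
            _ = (∑ j ∈ Finset.range (r+1), (2:ℝ) ^ j) * 2 ^ m := by
                rw [← Finset.sum_mul]
                congr 1
                rw [← Finset.sum_range_reflect (fun j => (2:ℝ)^j) (r+1)]
                refine Finset.sum_congr rfl fun j hj => by simp
            _ ≤ (2:ℝ) ^ (r+1) * 2 ^ m := by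
                refine mul_le_mul_of_nonneg_right ?_ (by positivity)
                have h1 := geom_sum_eq (by norm_num : (2:ℝ) ≠ 1) (r+1)
                rw [h1]
                have h2 : (0:ℝ) < 2 ^ (r+1) := by positivity
                norm_num
            _ = 2 ^ (r + (m+1)) := by ring

lemma tri (r : ℕ) (F : ℕ → ℕ → ℂ) :
    ∑ j ∈ Finset.range (r+1), ∑ p ∈ Finset.range (j+1), F p (j - p)
      = ∑ p ∈ Finset.range (r+1), ∑ q ∈ Finset.range (r-p+1), F p q := by
  rw [Finset.sum_sigma', Finset.sum_sigma']
  refine Finset.sum_nbij' (fun x => ⟨x.2, x.1 - x.2⟩) (fun x => ⟨x.1 + x.2, x.1⟩)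
    ?_ ?_ ?_ ?_ ?_
  · intro x hx
    simp only [Finset.mem_sigma, Finset.mem_range] at *
    omega
  · intro x hx
    simp only [Finset.mem_sigma, Finset.mem_range] at *
    omega
  · intro x hx
    simp only [Finset.mem_sigma, Finset.mem_range] at hx
    ext <;> simp <;> omega
  · intro x hx
    simp only [Finset.mem_sigma, Finset.mem_range] at hx
    ext <;> simp <;> omega
  · intro x hx
    rfl

lemma hp_sub {m : ℕ} (a b : ℂ) (ν : Fin m → ℂ) (r : ℕ) :
    hp (m+1) (Fin.cons a ν) (r+1) - hp (m+1) (Fin.cons b ν) (r+1)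
      = (a - b) * hp (m+2) (Fin.cons a (Fin.cons b ν)) r := by
  have geo : ∀ j : ℕ, a^(j+1) - b^(j+1) = (a-b) * ∑ p ∈ Finset.range (j+1), a^p * b^(j-p) := by
    intro j
    rw [← geom_sum₂_mul a b (j+1)]
    simp only [Nat.add_sub_cancel]
    ring
  simp only [hp, Fin.cons_zero, Fin.tail_cons]
  rw [← Finset.sum_sub_distrib]
  have e1 : ∀ j ∈ Finset.range (r+2),
      a ^ j * hp m ν (r+1-j) - b ^ j * hp m ν (r+1-j)
        = (a^j - b^j) * hp m ν (r+1-j) := fun j _ => by ring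
  rw [Finset.sum_congr rfl e1, Finset.sum_range_succ']
  simp only [pow_zero, sub_self, zero_mul, add_zero]
  calc ∑ j ∈ Finset.range (r+1), (a^(j+1) - b^(j+1)) * hp m ν (r+1-(j+1))
      = (a-b) * ∑ j ∈ Finset.range (r+1), ∑ p ∈ Finset.range (j+1),
          (a^p * b^(j-p)) * hp m ν (r-j) := by
        rw [Finset.mul_sum]
        refine Finset.sum_congr rfl fun j _ => ?_
        rw [geo j]
        have : r + 1 - (j+1) = r - j := by omega
        rw [this, mul_assoc, Finset.sum_mul, Finset.mul_sum]
    _ = (a-b) * ∑ p ∈ Finset.range (r+1), ∑ q ∈ Finset.range (r-p+1),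
          (a^p * b^q) * hp m ν (r-p-q) := by
        congr 1
        have := tri r (fun p q => (a^p * b^q) * hp m ν (r - p - q))
        rw [← this]
        refine Finset.sum_congr rfl fun j hj => Finset.sum_congr rfl fun p hp' => ?_
        have hp2 : p ≤ j := Nat.lt_succ_iff.mp (Finset.mem_range.mp hp')
        have h3 : r - p - (j - p) = r - j := by omega
        rw [h3]
    _ = (a - b) * ∑ p ∈ Finset.range (r+1), a^p *
          ∑ q ∈ Finset.range (r-p+1), b^q * hp m ν (r-p-q) := by
        congr 1
        refine Finset.sum_congr rfl fun p _ => ?_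
        rw [Finset.mul_sum]
        exact Finset.sum_congr rfl fun q _ => by ring

lemma dd_rec {m : ℕ} {a b : ℂ} {ν : Fin m → ℂ} (hab : a ≠ b)
    (ha : ∀ j, ν j ≠ a) (hb : ∀ j, ν j ≠ b) (hν : Function.Injective ν) (k : ℕ) :
    (a - b) * dd (Fin.cons a (Fin.cons b ν)) k
      = dd (Fin.cons a ν) k - dd (Fin.cons b ν) k := by
  have hab' : a - b ≠ 0 := sub_ne_zero.mpr hab
  have hPa : (∏ j, (a - ν j)) ≠ 0 :=
    Finset.prod_ne_zero_iff.mpr fun j _ => sub_ne_zero.mpr fun h => ha j h.symm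
  have hPb : (∏ j, (b - ν j)) ≠ 0 :=
    Finset.prod_ne_zero_iff.mpr fun j _ => sub_ne_zero.mpr fun h => hb j h.symm
  rw [dd_cons, dd_cons, dd_cons]
  simp only [Fin.sum_univ_succ, Fin.cons_zero, Fin.cons_succ, pc_cons_zero, pc_cons_succ]
  have hprod : (∏ j : Fin (m+1), (a - (Fin.cons b ν : Fin (m+1) → ℂ) j)) = (a - b) * ∏ j, (a - ν j) := by
    rw [Fin.prod_univ_succ]; simp
  rw [hprod]
  have h3 : ∀ t : Fin m, (a - b) * (ν t ^ k * ((ν t - a) * ((ν t - b) * pc ν t))⁻¹)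
      = ν t ^ k * ((ν t - a) * pc ν t)⁻¹ - ν t ^ k * ((ν t - b) * pc ν t)⁻¹ := by
    intro t
    have h4 : ν t - a ≠ 0 := sub_ne_zero.mpr (ha t)
    have h5 : ν t - b ≠ 0 := sub_ne_zero.mpr (hb t)
    have h6 := pc_ne_zero hν t
    field_simp
    ring
  rw [mul_add, mul_add, Finset.mul_sum]
  rw [Finset.sum_congr rfl (fun t _ => h3 t), Finset.sum_sub_distrib]
  have h1 : (a-b) * (a^k * ((a-b) * ∏ j, (a - ν j))⁻¹) = a^k * (∏ j, (a - ν j))⁻¹ := by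
    field_simp
  have h2 : (a-b) * (b^k * ((b-a) * ∏ j, (b - ν j))⁻¹) = -(b^k * (∏ j, (b - ν j))⁻¹) := by
    have hba' : b - a ≠ 0 := sub_ne_zero.mpr (Ne.symm hab)
    field_simp
    ring
  linear_combination h1 + h2

lemma hp_zero_eq (μ : Fin 0 → ℂ) (r : ℕ) : hp 0 μ r = if r = 0 then 1 else 0 := by
  match r with
  | 0 => rfl
  | (r+1) => rfl

lemma dd_eq : ∀ (m : ℕ) (μ : Fin (m+1) → ℂ), Function.Injective μ → ∀ k,
    dd μ k = if k < m then 0 else hp (m+1) μ (k - m) := by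
  intro m
  induction m with
  | zero =>
    intro μ hμ k
    simp only [Nat.not_lt_zero, if_false, Nat.sub_zero]
    have hpc : pc μ 0 = 1 := by
      rw [pc, prod_erase_univ]
      simp
    have hside : hp (0+1) μ k = μ 0 ^ k := by
      rw [hp]
      rw [Finset.sum_eq_single k]
      · rw [Nat.sub_self, hp_zero_eq]; simp
      · intro j hj hne
        have hj' : j < k + 1 := Finset.mem_range.mp hj
        have : k - j ≠ 0 := by omega
        rw [hp_zero_eq, if_neg this, mul_zero]
      · intro h; exact absurd (Finset.self_mem_range_succ k) h
    rw [dd, Fin.sum_univ_one, hpc, hside]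
    simp
  | succ m ih =>
    intro μ hμ k
    have hμeq : μ = Fin.cons (μ 0) (Fin.cons (μ 1) (Fin.tail (Fin.tail μ))) := by
      funext i
      refine Fin.cases rfl (fun j => ?_) i
      rw [Fin.cons_succ]
      refine Fin.cases ?_ (fun t => rfl) j
      rw [Fin.cons_zero]
      congr 1
    set a := μ 0 with ha_def
    set b := μ 1 with hb_def
    set ν := Fin.tail (Fin.tail μ) with hν_def
    have hν : Function.Injective ν := by
      intro x y hxy
      have := hμ hxy
      exact Fin.succ_injective _ (Fin.succ_injective _ this)
    have hab : a ≠ b := fun h => by simpa using hμ h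
    have ha : ∀ j, ν j ≠ a := by
      intro j h
      have := hμ h
      exact Fin.succ_ne_zero _ this
    have hb : ∀ j, ν j ≠ b := by
      intro j h
      have h2 := hμ h
      have : (j.succ.succ : Fin (m+2)).val = (1 : Fin (m+2)).val := by rw [h2]
      simp [Fin.val_succ] at this
    have hinj1 : Function.Injective (Fin.cons a ν : Fin (m+1) → ℂ) := by
      rw [Fin.cons_injective_iff]
      constructor
      · rintro ⟨t, ht⟩
        exact ha t ht
      · exact hν
    have hinj2 : Function.Injective (Fin.cons b ν : Fin (m+1) → ℂ) := by
      rw [Fin.cons_injective_iff]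
      constructor
      · rintro ⟨t, ht⟩
        exact hb t ht
      · exact hν
    have hab' : a - b ≠ 0 := sub_ne_zero.mpr hab
    have hrec := dd_rec hab ha hb hν k
    have hkey : dd (Fin.cons a (Fin.cons b ν) : Fin (m+2) → ℂ) k
        = (dd (Fin.cons a ν : Fin (m+1) → ℂ) k - dd (Fin.cons b ν : Fin (m+1) → ℂ) k)
            / (a - b) := by
      rw [eq_div_iff hab', mul_comm, hrec]
    rw [hμeq, hkey, ih _ hinj1 k, ih _ hinj2 k]
    rcases lt_trichotomy k m with h | h | h
    · rw [if_pos h, if_pos h, if_pos (by omega : k < m + 1)]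
      simp
    · subst h
      rw [if_neg (lt_irrefl k), Nat.sub_self, hp_zero _ _, hp_zero _ _,
        if_pos (by omega : k < k + 1)]
      simp
    · rw [if_neg (by omega : ¬ k < m), if_neg (by omega : ¬ k < m),
        if_neg (by omega : ¬ k < m + 1)]
      have hk1 : k - m = (k - (m+1)) + 1 := by omega
      rw [hk1, hp_sub a b ν (k - (m+1)), mul_comm, mul_div_assoc, div_self hab', mul_one]

lemma summable_exp_aux (z : ℂ) : Summable (fun k : ℕ => z ^ k / (k.factorial : ℂ)) := by
  refine Summable.of_norm ?_
  refine (Real.summable_pow_div_factorial ‖z‖).congr fun k => ?_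
  rw [norm_div, norm_pow]
  norm_num

lemma cexp_tsum (z : ℂ) : Complex.exp z = ∑' k : ℕ, z ^ k / (k.factorial : ℂ) := by
  rw [Complex.exp_eq_exp_ℂ, NormedSpace.exp_eq_tsum_div]

set_option maxHeartbeats 1000000 in
lemma key_est {m : ℕ} (μ : Fin (m+1) → ℂ) (hinj : Function.Injective μ)
    {ε : ℝ} (hε0 : 0 ≤ ε) (hε1 : ε ≤ 1) (hμ : ∀ i, ‖μ i‖ ≤ ε)
    {x : ℝ} (hx : |x| ≤ Real.pi) :
    ‖(m.factorial : ℂ) * (∑ i, Complex.exp (μ i * x) * (pc μ i)⁻¹) - (x:ℂ)^m‖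
      ≤ 2 * (2*Real.pi)^(m+1) * Real.exp (2*Real.pi) * ε := by
  have hπ : 0 < Real.pi := Real.pi_pos
  set u : ℕ → ℂ := fun k => (x:ℂ)^k / (k.factorial : ℂ) * dd μ k with hu_def
  -- step 1 : the sum equals ∑' u
  have step1 : (∑ i, Complex.exp (μ i * x) * (pc μ i)⁻¹) = ∑' k, u k := by
    have hexp : ∀ i : Fin (m+1), Complex.exp (μ i * x) * (pc μ i)⁻¹
        = ∑' k : ℕ, (μ i * x) ^ k / (k.factorial : ℂ) * (pc μ i)⁻¹ := by
      intro i
      rw [cexp_tsum, tsum_mul_right]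
    rw [Finset.sum_congr rfl fun i _ => hexp i]
    rw [← Summable.tsum_finsetSum (fun i _ => (summable_exp_aux (μ i * x)).mul_right _)]
    refine tsum_congr fun k => ?_
    simp only [hu_def, dd]
    rw [Finset.mul_sum]
    refine Finset.sum_congr rfl fun i _ => ?_
    rw [mul_pow]
    ring
  -- norm bound for u
  have hw : ∀ k, ‖u k‖ ≤ 2 * (2*Real.pi)^k / (k.factorial : ℝ) := by
    intro k
    have habs : ‖u k‖ = |x|^k / (k.factorial : ℝ) * ‖dd μ k‖ := by
      rw [hu_def]
      simp only [norm_mul, norm_div, norm_pow, Complex.norm_real, Real.norm_eq_abs,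
        Complex.norm_natCast]
    have hdd : ‖dd μ k‖ ≤ 2^(k+1) := by
      rw [dd_eq m μ hinj k]
      by_cases h : k < m
      · simp only [if_pos h, norm_zero]
        positivity
      · simp only [if_neg h]
        calc ‖hp (m+1) μ (k-m)‖ ≤ 2 ^ ((k-m) + (m+1)) * ε ^ (k-m) :=
              hp_bound ε hε0 (m+1) μ hμ (k-m)
          _ ≤ 2 ^ (k+1) * 1 := by
              refine mul_le_mul ?_ (pow_le_one₀ hε0 hε1) (by positivity) (by positivity)
              refine pow_le_pow_right₀ (by norm_num) (by omega)
          _ = 2 ^ (k+1) := mul_one _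
    rw [habs]
    have hxk : |x|^k ≤ Real.pi^k := pow_le_pow_left₀ (abs_nonneg x) hx k
    calc |x|^k / (k.factorial : ℝ) * ‖dd μ k‖
        ≤ Real.pi^k / (k.factorial : ℝ) * 2^(k+1) := by
          refine mul_le_mul (by gcongr) hdd (norm_nonneg _) (by positivity)
      _ = 2 * (2*Real.pi)^k / (k.factorial : ℝ) := by
          rw [mul_pow, pow_succ]
          ring
    -- done
  have hsum_norm : Summable (fun k => ‖u k‖) := by
    refine Summable.of_nonneg_of_le (fun k => norm_nonneg _) hw ?_
    refine ((Real.summable_pow_div_factorial (2*Real.pi)).mul_left 2).congr fun k => ?_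
    ring
  have hsum_u : Summable u := Summable.of_norm hsum_norm
  -- step 3: split the series
  have hsplit := (Summable.sum_add_tsum_nat_add (m+1) hsum_u).symm
  have hhead : (∑ i ∈ Finset.range (m+1), u i) = (x:ℂ)^m / (m.factorial : ℂ) := by
    rw [Finset.sum_range_succ]
    have h0 : ∀ i ∈ Finset.range m, u i = 0 := by
      intro i hi
      rw [hu_def]
      simp only
      rw [dd_eq m μ hinj i, if_pos (Finset.mem_range.mp hi), mul_zero]
    rw [Finset.sum_congr rfl h0, Finset.sum_const, smul_zero, zero_add]
    rw [hu_def]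
    simp only
    rw [dd_eq m μ hinj m, if_neg (lt_irrefl m), Nat.sub_self, hp_zero, mul_one]
  set R : ℂ := ∑' i : ℕ, u (i + (m+1)) with hR_def
  have hfac_ne : (m.factorial : ℂ) ≠ 0 := Nat.cast_ne_zero.mpr (Nat.factorial_ne_zero m)
  have step4 : (m.factorial : ℂ) * (∑' k, u k) - (x:ℂ)^m = (m.factorial : ℂ) * R := by
    rw [hsplit, hhead]
    field_simp
    ring
  rw [step1, step4]
  -- step 5: estimate
  have habsR : ‖(m.factorial : ℂ) * R‖ = (m.factorial : ℝ) * ‖R‖ := by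
    rw [norm_mul, Complex.norm_natCast]
  rw [habsR]
  have hsumtail : Summable (fun i : ℕ => ‖u (i + (m+1))‖) :=
    (summable_nat_add_iff (m+1)).mpr hsum_norm
  have hRle : ‖R‖ ≤ ∑' i : ℕ, ‖u (i + (m+1))‖ := norm_tsum_le_tsum_norm hsumtail
  set v : ℕ → ℝ := fun i => (2 * (2*Real.pi)^(m+1) * ε) * ((2*Real.pi)^i / (i.factorial : ℝ))
    with hv_def
  have hterm : ∀ i : ℕ, (m.factorial : ℝ) * ‖u (i + (m+1))‖ ≤ v i := by
    intro i
    set k := i + (m+1) with hk_def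
    have habs : ‖u k‖ = |x|^k / (k.factorial : ℝ) * ‖dd μ k‖ := by
      rw [hu_def]
      simp only [norm_mul, norm_div, norm_pow, Complex.norm_real, Real.norm_eq_abs,
        Complex.norm_natCast]
    have hdd : ‖dd μ k‖ ≤ 2^(i+(m+2)) * ε^(i+1) := by
      have h1 : k - m = i + 1 := by omega
      rw [dd_eq m μ hinj k, if_neg (by omega), h1]
      have := hp_bound ε hε0 (m+1) μ hμ (k - m)
      rw [h1] at this
      calc ‖hp (m+1) μ (i+1)‖ ≤ 2 ^ ((i+1) + (m+1)) * ε ^ (i+1) := this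
        _ = 2^(i+(m+2)) * ε^(i+1) := by ring_nf
    have hfac2 : (m.factorial : ℝ) / (k.factorial : ℝ) ≤ 1 / (i.factorial : ℝ) := by
      rw [div_le_div_iff₀ (by positivity) (by positivity)]
      have hdvd := Nat.factorial_mul_factorial_dvd_factorial_add m i
      have hle : m.factorial * i.factorial ≤ (m+i).factorial :=
        Nat.le_of_dvd (Nat.factorial_pos _) hdvd
      have hle2 : (m+i).factorial ≤ k.factorial := Nat.factorial_le (by omega)
      have : m.factorial * i.factorial ≤ k.factorial := le_trans hle hle2
      exact_mod_cast by linarith [this]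
    have hxk : |x|^k ≤ Real.pi^k := pow_le_pow_left₀ (abs_nonneg x) hx k
    have hεp : ε^(i+1) ≤ ε := by
      calc ε^(i+1) = ε^i * ε := by ring
        _ ≤ 1 * ε := mul_le_mul_of_nonneg_right (pow_le_one₀ hε0 hε1) hε0
        _ = ε := one_mul ε
    calc (m.factorial : ℝ) * ‖u k‖
        = (m.factorial : ℝ) / (k.factorial : ℝ) * (|x|^k * ‖dd μ k‖) := by
          rw [habs]; ring
      _ ≤ (1 / (i.factorial : ℝ)) * (Real.pi^k * (2^(i+(m+2)) * ε)) := by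
          refine mul_le_mul hfac2 ?_ (by positivity) (by positivity)
          refine mul_le_mul hxk ?_ (norm_nonneg _) (by positivity)
          calc ‖dd μ k‖ ≤ 2^(i+(m+2)) * ε^(i+1) := hdd
            _ ≤ 2^(i+(m+2)) * ε := by
                exact mul_le_mul_of_nonneg_left hεp (by positivity)
      _ = v i := by
          rw [hv_def, hk_def]
          simp only
          rw [mul_pow, mul_pow]
          ring
  calc (m.factorial : ℝ) * ‖R‖
      ≤ (m.factorial : ℝ) * ∑' i : ℕ, ‖u (i + (m+1))‖ :=
        mul_le_mul_of_nonneg_left hRle (by positivity)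
    _ = ∑' i : ℕ, (m.factorial : ℝ) * ‖u (i + (m+1))‖ := by
        rw [← tsum_mul_left]
    _ ≤ ∑' i : ℕ, v i := by
        refine Summable.tsum_le_tsum hterm (hsumtail.mul_left _) ?_
        exact ((Real.summable_pow_div_factorial (2*Real.pi)).mul_left _)
    _ = (2 * (2*Real.pi)^(m+1) * ε) * ∑' i : ℕ, ((2*Real.pi)^i / (i.factorial : ℝ)) := by
        rw [tsum_mul_left]
    _ = 2 * (2*Real.pi)^(m+1) * Real.exp (2*Real.pi) * ε := by
        rw [Real.exp_eq_exp_ℝ, NormedSpace.exp_eq_tsum_div]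
        ring

lemma L2_le {g : ℝ → ℂ} (hg : Continuous g) {B : ℝ} (hB : 0 ≤ B)
    (h : ∀ x ∈ Set.Icc (-Real.pi) Real.pi, ‖g x‖ ≤ B) :
    L2norm g ≤ B * Real.sqrt (2 * Real.pi) := by
  have hπ := Real.pi_pos
  have hint : IntegrableOn (fun x => ‖g x‖^2) (Set.Icc (-Real.pi) Real.pi) :=
    (hg.norm.pow 2).integrableOn_Icc
  have hintc : IntegrableOn (fun _ : ℝ => B^2) (Set.Icc (-Real.pi) Real.pi) :=
    continuous_const.integrableOn_Icc
  have hmono : (∫ x in Set.Icc (-Real.pi) Real.pi, ‖g x‖^2)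
      ≤ ∫ _x in Set.Icc (-Real.pi) Real.pi, B^2 := by
    refine setIntegral_mono_on hint hintc measurableSet_Icc ?_
    intro x hx
    have := h x hx
    nlinarith [norm_nonneg (g x)]
  have hconst : (∫ _x in Set.Icc (-Real.pi) Real.pi, (B^2 : ℝ)) = (2*Real.pi) * B^2 := by
    rw [setIntegral_const, Real.volume_real_Icc_of_le (by linarith), smul_eq_mul]
    ring_nf
  rw [L2norm]
  calc Real.sqrt (∫ x in Set.Icc (-Real.pi) Real.pi, ‖g x‖^2)
      ≤ Real.sqrt ((2*Real.pi) * B^2) := Real.sqrt_le_sqrt (by rw [← hconst]; exact hmono)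
    _ = B * Real.sqrt (2*Real.pi) := by
        rw [mul_comm, Real.sqrt_mul (by positivity), Real.sqrt_sq hB]

lemma expLinIndep {n : ℕ} (l : Fin n → ℂ) (hl : Function.Injective l)
    (hsmall : ∀ i, ‖l i‖ < 1) :
    LinearIndependent ℂ (fun i : Fin n => fun x : ℝ => Complex.exp (l i * x)) := by
  have hπ := Real.pi_gt_three
  rw [Fintype.linearIndependent_iff]
  intro g hg
  set y : Fin n → ℂ := fun i => Complex.exp (l i) with hy_def
  have hy : Function.Injective y := by
    intro i j hij
    rcases Complex.exp_eq_exp_iff_exists_int.mp hij with ⟨t, ht⟩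
    have habs : ‖l i - l j‖ < 2 := by
      calc ‖l i - l j‖ ≤ ‖l i‖ + ‖l j‖ := by
            exact norm_sub_le _ _
        _ < 2 := by linarith [hsmall i, hsmall j]
    have hval : ‖l i - l j‖ = |(t:ℝ)| * (2*Real.pi) := by
      rw [ht, add_sub_cancel_left]
      simp only [norm_mul, Complex.norm_I, Complex.norm_two, Complex.norm_real, Real.norm_eq_abs,
        Complex.norm_intCast, mul_one]
      rw [abs_of_pos Real.pi_pos]
    have ht0 : t = 0 := by
      by_contra h0
      have h1 : (1:ℝ) ≤ |(t:ℝ)| := by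
        have := Int.one_le_abs (by omega : t ≠ 0)
        exact_mod_cast this
      nlinarith
    apply hl
    rw [ht, ht0]
    simp
  have hmul : ((Matrix.vandermonde y).transpose).mulVec g = 0 := by
    funext t
    have h0 := congrFun hg (((t : ℕ) : ℝ))
    simp only [Finset.sum_apply, Pi.smul_apply, smul_eq_mul, Pi.zero_apply] at h0
    simp only [Matrix.mulVec, dotProduct, Matrix.transpose_apply, Matrix.vandermonde,
      Matrix.of_apply, Pi.zero_apply]
    rw [← h0]
    refine Finset.sum_congr rfl fun j _ => ?_
    have : Complex.exp (l j * (((t:ℕ):ℝ):ℂ)) = y j ^ (t:ℕ) := by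
      rw [Complex.ofReal_natCast, mul_comm, Complex.exp_nat_mul]
    rw [this]
    ring
  have hdet : ((Matrix.vandermonde y).transpose).det ≠ 0 := by
    rw [Matrix.det_transpose, Matrix.det_vandermonde]
    refine Finset.prod_ne_zero_iff.mpr fun i _ => Finset.prod_ne_zero_iff.mpr fun j hj => ?_
    have hij : i ≠ j := fun h => by
      rw [h] at hj
      exact absurd (Finset.mem_Ioi.mp hj) (lt_irrefl j)
    exact sub_ne_zero.mpr fun h => hij (hy h.symm)
  have := Matrix.eq_zero_of_mulVec_eq_zero hdet hmul
  exact fun i => congrFun this i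

/-- Theorem 3.3: for every `δ > 0` there is `ε₀ > 0` such that whenever
`λ₁, …, λₙ` are mutually distinct complex numbers with `|λᵢ| < ε₀`, the
`n`-dimensional subspace `L = Span(e^{λ₁ x}, …, e^{λₙ x})` has a basis
`f₁, …, fₙ` (linearly independent and spanning `L`) with
`‖f_s(x) − x^{s-1}‖_{L²([-π,π])} < δ` for all `s`; consequently, as all `λᵢ → 0`,
`L` converges to `M = Span(1, x, …, x^{n-1})` in the sense of convergence of
subspaces of a Hilbert space. -/
theorem stmt13 (n : ℕ) (hn : 1 ≤ n) :
    ∀ δ > (0 : ℝ), ∃ ε₀ > (0 : ℝ), ∀ l : Fin n → ℂ, Function.Injective l →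
      (∀ i, ‖l i‖ < ε₀) →
      ∃ f : Fin n → (ℝ → ℂ),
        LinearIndependent ℂ f ∧
        Submodule.span ℂ (Set.range f) =
          Submodule.span ℂ
            (Set.range fun i : Fin n => fun x : ℝ => Complex.exp (l i * x)) ∧
        ∀ s : Fin n, L2norm (fun x : ℝ => f s x - (x : ℂ) ^ (s : ℕ)) < δ := by
  intro δ hδ
  have hπ := Real.pi_pos
  have hπ1 : 1 ≤ 2 * Real.pi := by nlinarith [Real.pi_gt_three]
  set C : ℝ := 2 * (2*Real.pi)^n * Real.exp (2*Real.pi) * Real.sqrt (2*Real.pi) with hC_def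
  have hC0 : 0 < C := by positivity
  set ε₀ : ℝ := min 1 (δ / (C + 1)) with hε₀_def
  have hε₀pos : 0 < ε₀ := lt_min one_pos (by positivity)
  refine ⟨ε₀, hε₀pos, ?_⟩
  intro l hl hlε
  have hε₀1 : ε₀ ≤ 1 := min_le_left _ _
  set e : Fin n → (ℝ → ℂ) := fun i => fun x : ℝ => Complex.exp (l i * x) with he_def
  set f : Fin n → (ℝ → ℂ) := fun s => fun x : ℝ =>
    (((s:ℕ)).factorial : ℂ) * ∑ i : Fin ((s:ℕ)+1),
       Complex.exp ((l ∘ Fin.castLE s.isLt) i * x) * (pc (l ∘ Fin.castLE s.isLt) i)⁻¹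
    with hf_def
  have hμinj : ∀ s : Fin n, Function.Injective (l ∘ Fin.castLE s.isLt) :=
    fun s => hl.comp (Fin.castLE_injective _)
  have hcomb : ∀ s : Fin n, f s = ∑ i : Fin ((s:ℕ)+1),
      ((((s:ℕ)).factorial : ℂ) * (pc (l ∘ Fin.castLE s.isLt) i)⁻¹) • e (Fin.castLE s.isLt i) := by
    intro s
    funext x
    rw [hf_def]
    simp only [Finset.sum_apply, Pi.smul_apply, smul_eq_mul, he_def, Function.comp_apply]
    rw [Finset.mul_sum]
    exact Finset.sum_congr rfl fun i _ => by ring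
  have hsub1 : Submodule.span ℂ (Set.range f) ≤ Submodule.span ℂ (Set.range e) := by
    rw [Submodule.span_le]
    rintro _ ⟨s, rfl⟩
    rw [hcomb s]
    exact Submodule.sum_mem _ fun i _ =>
      Submodule.smul_mem _ _ (Submodule.subset_span ⟨_, rfl⟩)
  have hsub2 : ∀ N : ℕ, ∀ s : Fin n, (s:ℕ) < N → e s ∈ Submodule.span ℂ (Set.range f) := by
    intro N
    induction N with
    | zero => intro s hs; omega
    | succ N ihN =>
      intro s hs
      set c : Fin ((s:ℕ)+1) → ℂ := fun i =>
        ((((s:ℕ)).factorial : ℂ) * (pc (l ∘ Fin.castLE s.isLt) i)⁻¹) with hc_def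
      have hlast : Fin.castLE s.isLt (Fin.last (s:ℕ)) = s := by
        ext
        simp
      have hsplit : f s = (∑ i : Fin (s:ℕ), c i.castSucc • e (Fin.castLE s.isLt i.castSucc))
          + c (Fin.last (s:ℕ)) • e s := by
        rw [hcomb s, Fin.sum_univ_castSucc, hlast]
      have hcne : c (Fin.last (s:ℕ)) ≠ 0 := by
        rw [hc_def]
        exact mul_ne_zero (Nat.cast_ne_zero.mpr (Nat.factorial_ne_zero _))
          (inv_ne_zero (pc_ne_zero (hμinj s) _))
      have hS : (∑ i : Fin (s:ℕ), c i.castSucc • e (Fin.castLE s.isLt i.castSucc))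
          ∈ Submodule.span ℂ (Set.range f) := by
        refine Submodule.sum_mem _ fun i _ => Submodule.smul_mem _ _ ?_
        refine ihN (Fin.castLE s.isLt i.castSucc) ?_
        have hv : ((Fin.castLE s.isLt i.castSucc : Fin n) : ℕ) = (i:ℕ) := by simp
        rw [hv]
        have := i.isLt
        omega
      have he_eq : e s = (c (Fin.last (s:ℕ)))⁻¹ • (f s
          - ∑ i : Fin (s:ℕ), c i.castSucc • e (Fin.castLE s.isLt i.castSucc)) := by
        rw [hsplit, add_sub_cancel_left, smul_smul, inv_mul_cancel₀ hcne, one_smul]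
      rw [he_eq]
      exact Submodule.smul_mem _ _
        (Submodule.sub_mem _ (Submodule.subset_span ⟨s, rfl⟩) hS)
  have hspan : Submodule.span ℂ (Set.range f) = Submodule.span ℂ (Set.range e) := by
    refine le_antisymm hsub1 ?_
    rw [Submodule.span_le]
    rintro _ ⟨s, rfl⟩
    exact hsub2 n s s.isLt
  have hee : LinearIndependent ℂ e :=
    expLinIndep l hl fun i => lt_of_lt_of_le (hlε i) hε₀1
  have hff : LinearIndependent ℂ f := by
    rw [linearIndependent_iff_card_eq_finrank_span]
    rw [linearIndependent_iff_card_eq_finrank_span] at hee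
    rw [Set.finrank, hspan]
    exact hee
  refine ⟨f, hff, hspan, ?_⟩
  intro s
  have hcont : Continuous fun x : ℝ => f s x - (x:ℂ)^(s:ℕ) := by
    simp only [hf_def]
    refine Continuous.sub ?_ (Complex.continuous_ofReal.pow _)
    refine Continuous.mul continuous_const ?_
    refine continuous_finset_sum _ fun i _ => ?_
    exact (Complex.continuous_exp.comp (continuous_const.mul Complex.continuous_ofReal)).mul
      continuous_const
  have hB0 : (0:ℝ) ≤ 2 * (2*Real.pi)^n * Real.exp (2*Real.pi) * ε₀ := by positivity
  have hbound : ∀ x ∈ Set.Icc (-Real.pi) Real.pi,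
      ‖f s x - (x:ℂ)^(s:ℕ)‖ ≤ 2 * (2*Real.pi)^n * Real.exp (2*Real.pi) * ε₀ := by
    intro x hx
    have hx' : |x| ≤ Real.pi := abs_le.mpr ⟨hx.1, hx.2⟩
    have hkey := key_est (l ∘ Fin.castLE s.isLt) (hμinj s) (le_of_lt hε₀pos) hε₀1
      (fun i => le_of_lt (hlε _)) hx'
    simp only [hf_def]
    refine le_trans hkey ?_
    have hpow : (2*Real.pi)^((s:ℕ)+1) ≤ (2*Real.pi)^n :=
      pow_le_pow_right₀ hπ1 s.isLt
    gcongr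
  have hL2 := L2_le hcont hB0 hbound
  calc L2norm (fun x : ℝ => f s x - (x:ℂ)^(s:ℕ))
      ≤ (2 * (2*Real.pi)^n * Real.exp (2*Real.pi) * ε₀) * Real.sqrt (2*Real.pi) := hL2
    _ = C * ε₀ := by rw [hC_def]; ring
    _ ≤ C * (δ / (C+1)) := mul_le_mul_of_nonneg_left (min_le_right _ _) hC0.le
    _ < δ := by
        rw [mul_div_assoc']
        rw [div_lt_iff₀ (by linarith)]
        nlinarith
end

section
/- (Theorem 4.1) Fix integers m ≥ 1 and k₁, …, k_m ≥ 1, fix m mutually distinct complex numbers Λ₁, …, Λ_m, and fix an index s ∈ {1, …, m}. For every δ > 0 there exists ε₀ > 0 such that: whenever λ_{ij} (i = 1, …, m; j = 1, …, kᵢ) are mutually distinct complex numbers with |λ_{ij} − Λᵢ| < ε₀ for all i, j, there exists a function f belonging to the span of the exponential functions e^{λ_{ij} x} in L²([−π, π]) such that ‖f(x) − x^{k_s − 1} e^{Λ_s x}‖_{L²([−π,π])} < δ. -/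
open MeasureTheory

open Complex Finset

/-- Cauchy coefficient formula for `z ↦ exp (z * w)` at `Λ` on the unit circle. -/
lemma cauchy_coeff (w Λ : ℂ) (n : ℕ) :
    (2 * Real.pi * I)⁻¹ • (∮ z in C(Λ, 1), (z - Λ)⁻¹ ^ n • (z - Λ)⁻¹ • Complex.exp (z * w))
      = (w ^ n / n.factorial) * Complex.exp (Λ * w) := by
  set f : ℂ → ℂ := fun z => Complex.exp (z * w) with hf
  set q : FormalMultilinearSeries ℂ ℂ ℂ :=
    FormalMultilinearSeries.ofScalars ℂ (fun k => Complex.exp (Λ * w) * w ^ k / k.factorial)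
    with hqdef
  have hdiff : Differentiable ℂ f := (differentiable_id.mul_const w).cexp
  have hp : HasFPowerSeriesOnBall f (cauchyPowerSeries f Λ 1) Λ 1 := by
    have := DifferentiableOn.hasFPowerSeriesOnBall (R := 1)
      (hdiff.differentiableOn (s := Metric.closedBall Λ ((1 : NNReal) : ℝ))) one_pos
    simpa using this
  have hsummable : Summable fun k : ℕ =>
      ‖Complex.exp (Λ * w) * w ^ k / k.factorial‖ * (1:ℝ) ^ k := by
    simp only [one_pow, mul_one, norm_div, norm_mul, norm_pow]
    have := (Real.summable_pow_div_factorial ‖w‖).mul_left ‖Complex.exp (Λ * w)‖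
    simpa [mul_div_assoc, Complex.norm_natCast] using this
  have hq : HasFPowerSeriesOnBall f q Λ 1 := by
    refine ⟨?_, one_pos, ?_⟩
    · have hnorm : ∀ k : ℕ, ‖q k‖ = ‖Complex.exp (Λ * w) * w ^ k / k.factorial‖ := fun k =>
        FormalMultilinearSeries.ofScalars_norm _ _ k
      have := FormalMultilinearSeries.le_radius_of_summable_norm (r := 1) q
        (by simpa [hnorm] using hsummable)
      simpa using this
    · intro y hy
      have h1 : HasSum (fun k : ℕ => (w * y) ^ k / (k.factorial : ℂ))
          (Complex.exp (w * y)) := by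
        rw [Complex.exp_eq_exp_ℂ]
        exact NormedSpace.expSeries_div_hasSum_exp (w * y)
      have h2 := h1.mul_left (Complex.exp (Λ * w))
      have : Complex.exp (Λ * w) * Complex.exp (w * y) = f (Λ + y) := by
        rw [hf, ← Complex.exp_add]; ring_nf
      rw [this] at h2
      convert h2 using 2 with k
      · rfl
      simp only [hqdef, FormalMultilinearSeries.ofScalars_apply_eq, smul_eq_mul]
      ring
  have heq : cauchyPowerSeries f Λ 1 = q :=
    hp.hasFPowerSeriesAt.eq_formalMultilinearSeries hq.hasFPowerSeriesAt
  have happ := congrArg (fun p : FormalMultilinearSeries ℂ ℂ ℂ => p n (fun _ => (1:ℂ))) heq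
  simp only [hqdef, FormalMultilinearSeries.ofScalars_apply_eq, smul_eq_mul, one_pow, mul_one]
    at happ
  rw [cauchyPowerSeries_apply] at happ
  simp only [hf] at happ
  simp only [one_div, smul_eq_mul, one_pow] at happ ⊢
  rw [happ]; ring

open MeasureTheory Complex Finset

lemma circleIntegral_finset_sum {ι : Type*} (s : Finset ι) (f : ι → ℂ → ℂ) {c : ℂ} {R : ℝ}
    (hf : ∀ i ∈ s, CircleIntegrable (f i) c R) :
    (∮ z in C(c, R), ∑ i ∈ s, f i z) = ∑ i ∈ s, ∮ z in C(c, R), f i z := by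
  simp only [circleIntegral, smul_sum]
  rw [intervalIntegral.integral_finset_sum]
  exact fun i hi => (hf i hi).out

lemma partial_fractions {n : ℕ} (hn : 0 < n) (ν : Fin n → ℂ) (hν : Function.Injective ν)
    (z : ℂ) (hz : ∀ j, z ≠ ν j) :
    (∏ j, (z - ν j))⁻¹ =
      ∑ j, (∏ l ∈ Finset.univ.erase j, (ν j - ν l))⁻¹ * (z - ν j)⁻¹ := by
  have : Nonempty (Fin n) := Fin.pos_iff_nonempty.1 hn
  have H := Lagrange.sum_basis (v := ν) (s := Finset.univ) hν.injOn univ_nonempty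
  have H2 := congrArg (Polynomial.eval z) H
  simp only [Polynomial.eval_finset_sum, Lagrange.basis, Polynomial.eval_prod,
    Lagrange.basisDivisor, Polynomial.eval_mul, Polynomial.eval_C, Polynomial.eval_sub,
    Polynomial.eval_X, Polynomial.eval_one] at H2
  have hne : ∀ j, z - ν j ≠ 0 := fun j => sub_ne_zero.2 (hz j)
  calc (∏ j, (z - ν j))⁻¹ = (∏ j, (z - ν j))⁻¹ *
        ∑ j, ∏ l ∈ Finset.univ.erase j, ((ν j - ν l)⁻¹ * (z - ν l)) := by rw [H2, mul_one]
    _ = _ := by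
        rw [Finset.mul_sum]
        refine Finset.sum_congr rfl fun j _ => ?_
        have h2 : (∏ l, (z - ν l)) = (z - ν j) * ∏ l ∈ Finset.univ.erase j, (z - ν l) :=
          (Finset.mul_prod_erase _ _ (mem_univ j)).symm
        have h1 : (∏ l ∈ Finset.univ.erase j, (z - ν l)) ≠ 0 :=
          Finset.prod_ne_zero_iff.2 fun l _ => hne l
        have hprodν : (∏ l ∈ Finset.univ.erase j, (ν j - ν l)) ≠ 0 :=
          Finset.prod_ne_zero_iff.2 fun l hl => sub_ne_zero.2
            fun h => (Finset.mem_erase.1 hl).1 (hν h.symm)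
        rw [Finset.prod_mul_distrib, h2, mul_inv, ← Finset.prod_inv_distrib]
        rw [Finset.prod_inv_distrib]
        field_simp
        congr 1
        rw [← Finset.prod_mul_distrib]
        exact Finset.prod_eq_one fun l hl => one_div_mul_cancel
          (sub_ne_zero.2 fun h => (Finset.mem_erase.1 hl).1 (hν h.symm))

lemma circle_to_sum {n : ℕ} (hn : 0 < n) (Λ : ℂ) (ν : Fin n → ℂ) (hν : Function.Injective ν)
    (hclose : ∀ j, ν j ∈ Metric.ball Λ 1) (w : ℂ) :
    (∮ z in C(Λ, 1), (∏ j, (z - ν j))⁻¹ • Complex.exp (z * w))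
      = (2 * Real.pi * I) •
        ∑ j, (∏ l ∈ Finset.univ.erase j, (ν j - ν l))⁻¹ • Complex.exp (ν j * w) := by
  have hdiff : Differentiable ℂ (fun z : ℂ => Complex.exp (z * w)) :=
    (differentiable_id.mul_const w).cexp
  have hsph : ∀ z ∈ Metric.sphere Λ (1:ℝ), ∀ j, z ≠ ν j := by
    intro z hz j hzj
    have := hclose j
    rw [mem_sphere_iff_norm] at hz
    rw [Metric.mem_ball, dist_eq_norm] at this
    rw [hzj] at hz
    exact absurd (hz ▸ this) (lt_irrefl _)
  have heq : Set.EqOn (fun z => (∏ j, (z - ν j))⁻¹ • Complex.exp (z * w))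
      (fun z => ∑ j, ((∏ l ∈ Finset.univ.erase j, (ν j - ν l))⁻¹ * (z - ν j)⁻¹) •
        Complex.exp (z * w)) (Metric.sphere Λ 1) := by
    intro z hz
    simp only
    rw [partial_fractions hn ν hν z (hsph z hz), Finset.sum_smul]
  rw [circleIntegral.integral_congr one_pos.le heq]
  have hint : ∀ j : Fin n, CircleIntegrable
      (fun z => ((∏ l ∈ Finset.univ.erase j, (ν j - ν l))⁻¹ * (z - ν j)⁻¹) •
        Complex.exp (z * w)) Λ 1 := by
    intro j
    apply ContinuousOn.circleIntegrable one_pos.le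
    apply ContinuousOn.fun_smul _ hdiff.continuous.continuousOn
    apply ContinuousOn.mul continuousOn_const
    exact ContinuousOn.inv₀ (by fun_prop) fun z hz => sub_ne_zero.2 (hsph z hz j)
  rw [circleIntegral_finset_sum _ _ (fun i _ => hint i), Finset.smul_sum]
  refine Finset.sum_congr rfl fun j _ => ?_
  have : (fun z => ((∏ l ∈ Finset.univ.erase j, (ν j - ν l))⁻¹ * (z - ν j)⁻¹) •
        Complex.exp (z * w)) = fun z => (∏ l ∈ Finset.univ.erase j, (ν j - ν l))⁻¹ •
        ((z - ν j)⁻¹ • Complex.exp (z * w)) := by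
    funext z; simp only [smul_eq_mul]; ring
  rw [this, circleIntegral.integral_smul,
    DiffContOnCl.circleIntegral_sub_inv_smul (hdiff.diffContOnCl) (hclose j)]
  simp only [smul_eq_mul]; ring

lemma norm_prod_sub_prod_le {ι : Type*} (s : Finset ι) (a b : ι → ℂ) {M ε : ℝ} (hM : 1 ≤ M)
    (hε : 0 ≤ ε) (ha : ∀ i ∈ s, ‖a i‖ ≤ M) (hb : ∀ i ∈ s, ‖b i‖ ≤ M)
    (hab : ∀ i ∈ s, ‖a i - b i‖ ≤ ε) :
    ‖(∏ i ∈ s, a i) - ∏ i ∈ s, b i‖ ≤ s.card * ε * M ^ s.card := by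
  induction s using Finset.cons_induction with
  | empty => simp
  | cons i s his ih =>
    have hM0 : 0 ≤ M := le_trans zero_le_one hM
    have hprod : ∀ c : ι → ℂ, (∀ i ∈ s, ‖c i‖ ≤ M) → ‖∏ i ∈ s, c i‖ ≤ M ^ s.card := by
      intro c hc
      calc ‖∏ i ∈ s, c i‖ ≤ ∏ i ∈ s, ‖c i‖ := norm_prod_le _ _
        _ ≤ ∏ _i ∈ s, M := Finset.prod_le_prod (fun _ _ => norm_nonneg _) hc
        _ = M ^ s.card := Finset.prod_const M
    have ha' : ∀ j ∈ s, ‖a j‖ ≤ M := fun j hj => ha j (Finset.mem_cons_of_mem hj)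
    have hb' : ∀ j ∈ s, ‖b j‖ ≤ M := fun j hj => hb j (Finset.mem_cons_of_mem hj)
    have hab' : ∀ j ∈ s, ‖a j - b j‖ ≤ ε := fun j hj => hab j (Finset.mem_cons_of_mem hj)
    have key : (∏ j ∈ Finset.cons i s his, a j) - ∏ j ∈ Finset.cons i s his, b j
        = (a i - b i) * (∏ j ∈ s, a j) + b i * ((∏ j ∈ s, a j) - ∏ j ∈ s, b j) := by
      rw [Finset.prod_cons, Finset.prod_cons]; ring
    rw [key, Finset.card_cons]
    calc ‖(a i - b i) * (∏ j ∈ s, a j) + b i * ((∏ j ∈ s, a j) - ∏ j ∈ s, b j)‖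
        ≤ ‖(a i - b i) * ∏ j ∈ s, a j‖ + ‖b i * ((∏ j ∈ s, a j) - ∏ j ∈ s, b j)‖ :=
          norm_add_le _ _
      _ = ‖a i - b i‖ * ‖∏ j ∈ s, a j‖ + ‖b i‖ * ‖(∏ j ∈ s, a j) - ∏ j ∈ s, b j‖ := by
          rw [norm_mul, norm_mul]
      _ ≤ ε * M ^ s.card + M * (s.card * ε * M ^ s.card) := by
          gcongr
          · exact hab i (Finset.mem_cons_self _ _)
          · exact hprod a ha'
          · exact hb i (Finset.mem_cons_self _ _)
          · exact ih ha' hb' hab'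
      _ ≤ (s.card + 1) * ε * M ^ (s.card + 1) := by
          have h1 : M ^ s.card ≤ M ^ (s.card + 1) := pow_le_pow_right₀ hM (Nat.le_succ _)
          have h2 : (0:ℝ) ≤ M ^ s.card := pow_nonneg hM0 _
          have h3 : (0:ℝ) ≤ M ^ (s.card + 1) := pow_nonneg hM0 _
          have : M * (s.card * ε * M ^ s.card) = s.card * ε * M ^ (s.card + 1) := by ring
          rw [this]
          nlinarith [mul_nonneg hε h2, Nat.cast_nonneg (α := ℝ) s.card]
      _ = (↑(s.card + 1)) * ε * M ^ (s.card + 1) := by push_cast; ring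

lemma key_pointwise {n : ℕ} (hn : 0 < n) (Λ : ℂ) (ν : Fin n → ℂ) (hν : Function.Injective ν)
    {ε : ℝ} (hε : 0 ≤ ε) (hε2 : ε ≤ 1/2) (hclose : ∀ j, ‖ν j - Λ‖ ≤ ε)
    (x : ℝ) (hx : |x| ≤ Real.pi) :
    ‖(((n-1).factorial : ℂ) *
        ∑ j, (∏ l ∈ Finset.univ.erase j, (ν j - ν l))⁻¹ * Complex.exp (ν j * x))
      - (x:ℂ)^(n-1) * Complex.exp (Λ * x)‖
    ≤ (n.factorial : ℝ) * n * 4^n * Real.exp ((‖Λ‖+1) * Real.pi) * ε := by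
  set w : ℂ := (x : ℂ) with hw
  have hball : ∀ j, ν j ∈ Metric.ball Λ 1 := by
    intro j
    rw [Metric.mem_ball, dist_eq_norm]
    exact lt_of_le_of_lt (hclose j) (by linarith)
  -- the two circle integrals
  have hB := circle_to_sum hn Λ ν hν hball w
  have hA := cauchy_coeff w Λ (n-1)
  set E : ℂ → ℂ := fun z => Complex.exp (z * w) with hE
  set g₁ : ℂ → ℂ := fun z => (∏ j, (z - ν j))⁻¹ • E z with hg₁
  set g₂ : ℂ → ℂ := fun z => (z - Λ)⁻¹ ^ (n-1) • (z - Λ)⁻¹ • E z with hg₂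
  set T : ℂ := 2 * Real.pi * I with hT
  have hT0 : T ≠ 0 := by
    simp only [hT]
    refine mul_ne_zero (mul_ne_zero two_ne_zero ?_) I_ne_zero
    exact_mod_cast Real.pi_ne_zero
  have hTnorm : ‖T‖ = 2 * Real.pi := by
    rw [hT, norm_mul, norm_mul, Complex.norm_I, mul_one]
    norm_num [Complex.norm_real, _root_.abs_of_nonneg Real.pi_pos.le]
  have hfact0 : ((n-1).factorial : ℂ) ≠ 0 := Nat.cast_ne_zero.2 (Nat.factorial_ne_zero _)
  -- rewrite hA : ∮ g₂ = T • (w^(n-1)/(n-1)! * exp (Λ*w))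
  have hA' : (∮ z in C(Λ, 1), g₂ z) = T • ((w ^ (n-1) / (n-1).factorial) * Complex.exp (Λ * w)) := by
    rw [← hA, smul_smul, mul_inv_cancel₀ hT0, one_smul]
  -- sphere facts
  have hsphere : ∀ z ∈ Metric.sphere Λ (1:ℝ), ‖z - Λ‖ = 1 := by
    intro z hz; rwa [mem_sphere_iff_norm] at hz
  have hzν : ∀ z ∈ Metric.sphere Λ (1:ℝ), ∀ j, (1:ℝ)/2 ≤ ‖z - ν j‖ := by
    intro z hz j
    have h1 : ‖z - Λ‖ - ‖ν j - Λ‖ ≤ ‖z - ν j‖ := by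
      have : z - ν j = (z - Λ) - (ν j - Λ) := by ring
      rw [this]
      exact norm_sub_norm_le _ _
    have := hclose j
    rw [hsphere z hz] at h1
    linarith
  have hzν0 : ∀ z ∈ Metric.sphere Λ (1:ℝ), ∀ j, z - ν j ≠ 0 := by
    intro z hz j
    intro h
    have := hzν z hz j
    rw [h, norm_zero] at this
    linarith
  -- integrability
  have hcontE : Continuous E := Complex.continuous_exp.comp (continuous_id.mul continuous_const)
  have hint₁ : CircleIntegrable g₁ Λ 1 := by
    apply ContinuousOn.circleIntegrable one_pos.le
    apply ContinuousOn.fun_smul _ hcontE.continuousOn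
    apply ContinuousOn.inv₀ (by fun_prop)
    intro z hz
    exact Finset.prod_ne_zero_iff.2 fun j _ => hzν0 z hz j
  have hint₂ : CircleIntegrable g₂ Λ 1 := by
    apply ContinuousOn.circleIntegrable one_pos.le
    have hzΛ : ∀ z ∈ Metric.sphere Λ (1:ℝ), z - Λ ≠ 0 := by
      intro z hz h
      have := hsphere z hz; rw [h, norm_zero] at this; norm_num at this
    apply ContinuousOn.fun_smul
    · exact (ContinuousOn.inv₀ (by fun_prop) hzΛ).pow _
    · exact ContinuousOn.fun_smul (ContinuousOn.inv₀ (by fun_prop) hzΛ) hcontE.continuousOn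
  -- the difference as a circle integral
  set S : ℂ := ∑ j, (∏ l ∈ Finset.univ.erase j, (ν j - ν l))⁻¹ * Complex.exp (ν j * w) with hS
  have hDT : T • (((n-1).factorial : ℂ) * S - w ^ (n-1) * Complex.exp (Λ * w))
      = ((n-1).factorial : ℂ) • (∮ z in C(Λ, 1), (g₁ z - g₂ z)) := by
    rw [circleIntegral.integral_sub hint₁ hint₂, smul_sub]
    have e1 : (∮ z in C(Λ, 1), g₁ z) = T • S := by
      rw [hB]; rfl
    rw [e1, hA']
    simp only [smul_eq_mul]
    field_simp
  -- pointwise bound on the circle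
  have hbound : ∀ z ∈ Metric.sphere Λ (1:ℝ),
      ‖g₁ z - g₂ z‖ ≤ (n:ℝ) * 4^n * Real.exp ((‖Λ‖+1) * Real.pi) * ε := by
    intro z hz
    have hz1 : ‖z - Λ‖ = 1 := hsphere z hz
    have hzΛ0 : z - Λ ≠ 0 := by intro h; rw [h, norm_zero] at hz1; norm_num at hz1
    set P : ℂ := ∏ j, (z - ν j) with hP
    set Q : ℂ := (z - Λ) ^ n with hQ
    have hg₂z : g₂ z = Q⁻¹ • E z := by
      simp only [hg₂, hQ, smul_eq_mul]
      rw [← mul_assoc, ← pow_succ, Nat.sub_add_cancel hn, inv_pow]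
    have hP0 : P ≠ 0 := Finset.prod_ne_zero_iff.2 fun j _ => hzν0 z hz j
    have hQ0 : Q ≠ 0 := pow_ne_zero _ hzΛ0
    have hnormP : (1/2:ℝ)^n ≤ ‖P‖ := by
      rw [hP]
      calc ((1:ℝ)/2)^n = ∏ _j : Fin n, ((1:ℝ)/2) := by rw [Finset.prod_const]; simp
        _ ≤ ∏ j : Fin n, ‖z - ν j‖ :=
            Finset.prod_le_prod (fun _ _ => by norm_num) (fun j _ => hzν z hz j)
        _ = ‖∏ j, (z - ν j)‖ := by
            rw [norm_prod]
    have hnormQ : ‖Q‖ = 1 := by rw [hQ, norm_pow, hz1, one_pow]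
    have hQP : ‖Q - P‖ ≤ (n:ℝ) * ε * 2^n := by
      have := norm_prod_sub_prod_le (Finset.univ : Finset (Fin n))
        (fun _ => z - Λ) (fun j => z - ν j) (M := 2) (ε := ε) one_le_two hε
        (fun i _ => by rw [hz1]; norm_num)
        (fun i _ => by
          show ‖z - ν i‖ ≤ 2
          have h : z - ν i = (z - Λ) - (ν i - Λ) := by ring
          rw [h]
          calc ‖(z - Λ) - (ν i - Λ)‖ ≤ ‖z - Λ‖ + ‖ν i - Λ‖ := norm_sub_le _ _
            _ ≤ 1 + ε := by rw [hz1]; exact add_le_add_right (hclose i) 1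
            _ ≤ 2 := by linarith)
        (fun i _ => by
          show ‖(z - Λ) - (z - ν i)‖ ≤ ε
          have h : (z - Λ) - (z - ν i) = ν i - Λ := by ring
          rw [h]; exact hclose i)
      simpa [hQ, hP, Finset.prod_const, Finset.card_univ] using this
    have hdiffinv : ‖P⁻¹ - Q⁻¹‖ ≤ (n:ℝ) * ε * 4^n := by
      rw [inv_sub_inv hP0 hQ0, norm_div, norm_mul, hnormQ, mul_one]
      rw [div_le_iff₀ (lt_of_lt_of_le (by positivity) hnormP)]
      calc ‖Q - P‖ ≤ (n:ℝ) * ε * 2^n := hQP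
        _ = ((n:ℝ) * ε * 4^n) * (1/2)^n := by
            rw [mul_assoc ((n:ℝ) * ε)]
            congr 1
            rw [div_pow, one_pow, mul_one_div, eq_div_iff (by positivity), ← mul_pow]
            norm_num
        _ ≤ ((n:ℝ) * ε * 4^n) * ‖P‖ := by
            have : (0:ℝ) ≤ (n:ℝ) * ε * 4^n := by positivity
            exact mul_le_mul_of_nonneg_left hnormP this
    have hnormE : ‖E z‖ ≤ Real.exp ((‖Λ‖+1) * Real.pi) := by
      rw [hE]
      simp only
      rw [Complex.norm_exp]
      apply Real.exp_le_exp.2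
      have hre : (z * w).re = z.re * x := by simp [hw, Complex.mul_re]
      rw [hre]
      have h1 : |z.re| ≤ ‖Λ‖ + 1 := by
        calc |z.re| ≤ ‖z‖ := Complex.abs_re_le_norm z
          _ = ‖z‖ := rfl
          _ = ‖Λ + (z - Λ)‖ := by ring_nf
          _ ≤ ‖Λ‖ + ‖z - Λ‖ := norm_add_le _ _
          _ = ‖Λ‖ + 1 := by rw [hz1]
      calc z.re * x ≤ |z.re * x| := le_abs_self _
        _ = |z.re| * |x| := abs_mul _ _
        _ ≤ (‖Λ‖ + 1) * Real.pi := by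
            apply mul_le_mul h1 hx (abs_nonneg _) (by positivity)
    calc ‖g₁ z - g₂ z‖ = ‖(P⁻¹ - Q⁻¹) * E z‖ := by
          rw [hg₁, hg₂z]; simp only [smul_eq_mul, hP, sub_mul]
      _ = ‖P⁻¹ - Q⁻¹‖ * ‖E z‖ := norm_mul _ _
      _ ≤ ((n:ℝ) * ε * 4^n) * Real.exp ((‖Λ‖+1) * Real.pi) := by
          apply mul_le_mul hdiffinv hnormE (norm_nonneg _) (by positivity)
      _ = (n:ℝ) * 4^n * Real.exp ((‖Λ‖+1) * Real.pi) * ε := by ring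
  -- norm of the circle integral
  have hIntBound : ‖∮ z in C(Λ, 1), (g₁ z - g₂ z)‖
      ≤ 2 * Real.pi * 1 * ((n:ℝ) * 4^n * Real.exp ((‖Λ‖+1) * Real.pi) * ε) := by
    have := circleIntegral.norm_integral_le_of_norm_le_const (c := Λ) (R := 1)
      (f := fun z => g₁ z - g₂ z) (C := (n:ℝ) * 4^n * Real.exp ((‖Λ‖+1) * Real.pi) * ε)
      one_pos.le hbound
    simpa using this
  -- conclude
  have hnormD := congrArg norm hDT
  rw [norm_smul, norm_smul, hTnorm] at hnormD
  have h2π : (0:ℝ) < 2 * Real.pi := by positivity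
  have hfinal : 2 * Real.pi * ‖((n-1).factorial : ℂ) * S - w ^ (n-1) * Complex.exp (Λ * w)‖
      ≤ ‖((n-1).factorial : ℂ)‖ *
        (2 * Real.pi * 1 * ((n:ℝ) * 4^n * Real.exp ((‖Λ‖+1) * Real.pi) * ε)) := by
    rw [hnormD]
    exact mul_le_mul_of_nonneg_left hIntBound (norm_nonneg _)
  have hfactnorm : ‖((n-1).factorial : ℂ)‖ = ((n-1).factorial : ℝ) := by
    simp [Complex.norm_natCast]
  rw [hfactnorm] at hfinal
  have hfle : ((n-1).factorial : ℝ) ≤ (n.factorial : ℝ) := by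
    exact_mod_cast Nat.factorial_le (Nat.sub_le n 1)
  have hgoal : ‖((n-1).factorial : ℂ) * S - w ^ (n-1) * Complex.exp (Λ * w)‖
      ≤ ((n-1).factorial : ℝ) * ((n:ℝ) * 4^n * Real.exp ((‖Λ‖+1) * Real.pi) * ε) := by
    nlinarith [norm_nonneg (((n-1).factorial : ℂ) * S - w ^ (n-1) * Complex.exp (Λ * w))]
  calc ‖((n-1).factorial : ℂ) * S - w ^ (n-1) * Complex.exp (Λ * w)‖
      ≤ ((n-1).factorial : ℝ) * ((n:ℝ) * 4^n * Real.exp ((‖Λ‖+1) * Real.pi) * ε) := hgoal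
    _ ≤ (n.factorial : ℝ) * ((n:ℝ) * 4^n * Real.exp ((‖Λ‖+1) * Real.pi) * ε) := by
        apply mul_le_mul_of_nonneg_right hfle (by positivity)
    _ = (n.factorial : ℝ) * n * 4^n * Real.exp ((‖Λ‖+1) * Real.pi) * ε := by ring

lemma L2norm_le_of_bound {g : ℝ → ℂ} (hg : Continuous g) {B : ℝ} (hB : 0 ≤ B)
    (h : ∀ x ∈ Set.Icc (-Real.pi) Real.pi, ‖g x‖ ≤ B) :
    L2norm g ≤ Real.sqrt (2 * Real.pi) * B := by
  rw [L2norm]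
  have h1 : (∫ x in Set.Icc (-Real.pi) Real.pi, ‖g x‖ ^ 2)
      ≤ ∫ _x in Set.Icc (-Real.pi) Real.pi, B ^ 2 := by
    apply setIntegral_mono_on
    · exact ((hg.norm.pow 2)).integrableOn_Icc
    · exact integrableOn_const measure_Icc_lt_top.ne
    · exact measurableSet_Icc
    · exact fun x hx => pow_le_pow_left₀ (norm_nonneg _) (h x hx) 2
  have h2 : (∫ _x in Set.Icc (-Real.pi) Real.pi, (B ^ 2 : ℝ)) = (2 * Real.pi) * B ^ 2 := by
    rw [setIntegral_const, Real.volume_real_Icc, smul_eq_mul,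
      max_eq_left (by linarith [Real.pi_pos] : (0:ℝ) ≤ Real.pi - -Real.pi)]
    ring
  calc Real.sqrt (∫ x in Set.Icc (-Real.pi) Real.pi, ‖g x‖ ^ 2)
      ≤ Real.sqrt ((2 * Real.pi) * B ^ 2) := Real.sqrt_le_sqrt (h1.trans_eq h2)
    _ = Real.sqrt (2 * Real.pi) * B := by
        rw [Real.sqrt_mul (by positivity), Real.sqrt_sq hB]

/-- Theorem 4.1: fix cluster limits `Λ₁, …, Λ_m` (mutually distinct),
multiplicities `k₁, …, k_m ≥ 1` and an index `s`. For every `δ > 0` there is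
`ε₀ > 0` such that whenever the `λ_{ij}` are mutually distinct with
`|λ_{ij} − Λᵢ| < ε₀`, some element `f` of the span of the exponentials
`e^{λ_{ij} x}` satisfies `‖f(x) − x^{k_s − 1} e^{Λ_s x}‖_{L²([-π,π])} < δ`. -/
theorem stmt14 (m : ℕ) (hm : 1 ≤ m) (k : Fin m → ℕ) (hk : ∀ i, 1 ≤ k i)
    (Λ : Fin m → ℂ) (hΛ : Function.Injective Λ) (s : Fin m) :
    ∀ δ > (0 : ℝ), ∃ ε₀ > (0 : ℝ),
      ∀ lam : (Σ i : Fin m, Fin (k i)) → ℂ, Function.Injective lam →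
      (∀ p : Σ i : Fin m, Fin (k i), ‖lam p - Λ p.1‖ < ε₀) →
      ∃ f : ℝ → ℂ,
        f ∈ Submodule.span ℂ
          (Set.range fun p : Σ i : Fin m, Fin (k i) =>
            fun x : ℝ => Complex.exp (lam p * x)) ∧
        L2norm (fun x : ℝ =>
          f x - (x : ℂ) ^ (k s - 1) * Complex.exp (Λ s * x)) < δ := by
  intro δ hδ
  set n := k s with hn'
  have hn : 0 < n := hk s
  set C : ℝ := (n.factorial : ℝ) * n * 4 ^ n * Real.exp ((‖Λ s‖ + 1) * Real.pi) with hC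
  have hC0 : 0 < C := by positivity
  set K : ℝ := Real.sqrt (2 * Real.pi) * C with hK
  have hK0 : 0 < K := by positivity
  set ε₀ : ℝ := min (1/2) (δ / (K + 1)) with hε₀def
  have hε₀pos : 0 < ε₀ := lt_min (by norm_num) (by positivity)
  refine ⟨ε₀, hε₀pos, ?_⟩
  intro lam hinj hcl
  set ν : Fin n → ℂ := fun j => lam ⟨s, j⟩ with hνdef
  have hνinj : Function.Injective ν := by
    intro a b h
    have := hinj h
    simpa using this
  have hclose : ∀ j, ‖ν j - Λ s‖ ≤ ε₀ := by
    intro j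
    exact le_of_lt (by exact hcl ⟨s, j⟩)
  set c : Fin n → ℂ :=
    fun j => ((n - 1).factorial : ℂ) * (∏ l ∈ Finset.univ.erase j, (ν j - ν l))⁻¹ with hcdef
  set f : ℝ → ℂ := fun x => ∑ j, c j * Complex.exp (ν j * x) with hfdef
  refine ⟨f, ?_, ?_⟩
  · have hfeq : f = ∑ j : Fin n, c j • (fun x : ℝ => Complex.exp (lam ⟨s, j⟩ * x)) := by
      funext x
      simp [hfdef, hνdef, Finset.sum_apply]
    rw [hfeq]
    apply Submodule.sum_mem
    intro j _
    exact Submodule.smul_mem _ _ (Submodule.subset_span ⟨⟨s, j⟩, rfl⟩)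
  · have hpt : ∀ x ∈ Set.Icc (-Real.pi) Real.pi,
        ‖f x - (x : ℂ) ^ (n - 1) * Complex.exp (Λ s * x)‖ ≤ C * ε₀ := by
      intro x hx
      have hxabs : |x| ≤ Real.pi := abs_le.2 ⟨hx.1, hx.2⟩
      have hfx : f x = ((n - 1).factorial : ℂ) *
          ∑ j, (∏ l ∈ Finset.univ.erase j, (ν j - ν l))⁻¹ * Complex.exp (ν j * x) := by
        rw [hfdef, Finset.mul_sum]
        exact Finset.sum_congr rfl fun j _ => by rw [hcdef, mul_assoc]
      rw [hfx]
      have := key_pointwise hn (Λ s) ν hνinj hε₀pos.le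
        (min_le_left _ _) hclose x hxabs
      calc ‖((n - 1).factorial : ℂ) *
            (∑ j, (∏ l ∈ Finset.univ.erase j, (ν j - ν l))⁻¹ * Complex.exp (ν j * x))
            - (x : ℂ) ^ (n - 1) * Complex.exp (Λ s * x)‖
          ≤ (n.factorial : ℝ) * n * 4 ^ n * Real.exp ((‖Λ s‖ + 1) * Real.pi) * ε₀ := this
        _ = C * ε₀ := by rw [hC]
    have hcont : Continuous (fun x : ℝ => f x - (x : ℂ) ^ (n - 1) * Complex.exp (Λ s * x)) := by
      apply Continuous.sub
      · apply continuous_finset_sum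
        intro j _
        exact continuous_const.mul
          (Complex.continuous_exp.comp (continuous_const.mul Complex.continuous_ofReal))
      · exact ((Complex.continuous_ofReal).pow _).mul
          (Complex.continuous_exp.comp (continuous_const.mul Complex.continuous_ofReal))
    have hL2 := L2norm_le_of_bound hcont (by positivity : (0:ℝ) ≤ C * ε₀) hpt
    calc L2norm (fun x : ℝ => f x - (x : ℂ) ^ (n - 1) * Complex.exp (Λ s * x))
        ≤ Real.sqrt (2 * Real.pi) * (C * ε₀) := hL2
      _ = K * ε₀ := by rw [hK]; ring
      _ ≤ K * (δ / (K + 1)) := by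
          exact mul_le_mul_of_nonneg_left (min_le_right _ _) hK0.le
      _ < δ := by
          rw [mul_div_assoc']
          rw [div_lt_iff₀ (by linarith)]
          nlinarith
end
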